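/- arXiv:1102.1324 — 10 statements merged into one kernel-verified Lean document; each statement's English description precedes it below -/
import Mathlib

section
/- Let Λ be a separable Hilbert space and A, B bounded positive operators on Λ with closed range. Define A ⪯ B to mean: for every ξ ∈ Λ there exists η ∈ Λ with Aξ = Bη and (Aξ, ξ) = (Bη, η). Then A ⪯ B if and only if ran(A) ⊆ ran(B) and P_{B,A} B⁻¹ = A⁻¹ on ran(A), where B⁻¹ denotes the inverse of B restricted to ran(B), A⁻¹ the inverse of A restricted to ran(A), and P_{B,A} the orthogonal projection of ran(B) onto ran(A). -/
open MeasureTheory ContinuousLinearMap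
open scoped ComplexOrder

noncomputable section

local notation "⟪" x ", " y "⟫" => @inner ℂ _ _ x y

section Defs

variable {X : Type*} {Λ : Type*} [NormedAddCommGroup Λ] [InnerProductSpace ℂ Λ]

/-- Data exhibiting a Hilbert space `H`, embedded in the `Λ`-valued functions on `X` by `J`,
as the reproducing kernel Hilbert space of the operator-valued kernel `K`;
`kf x ξ` is the element representing `K(x,·)ξ`. -/
structure IsVRKHS (K : X → X → Λ →L[ℂ] Λ) (H : Type*) [NormedAddCommGroup H]
    [InnerProductSpace ℂ H] (J : H →ₗ[ℂ] (X → Λ)) (kf : X → Λ → H) : Prop where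
  inj : Function.Injective J
  kfun_eq : ∀ (x : X) (ξ : Λ), J (kf x ξ) = fun y => K x y ξ
  repro : ∀ (f : H) (x : X) (ξ : Λ), ⟪kf x ξ, f⟫ = ⟪ξ, J f x⟫

/-- Data exhibiting `H` as the RKHS of a scalar-valued kernel `k` on `Y`. -/
structure IsSRKHS {Y : Type*} (k : Y → Y → ℂ) (H : Type*) [NormedAddCommGroup H]
    [InnerProductSpace ℂ H] (J : H →ₗ[ℂ] (Y → ℂ)) (kf : Y → H) : Prop where
  inj : Function.Injective J
  kfun_eq : ∀ y : Y, J (kf y) = fun z => k y z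
  repro : ∀ (f : H) (y : Y), ⟪kf y, f⟫ = J f y

/-- `H₁ ⪯ H₂` : every element of `H₁` is an element of `H₂` (as functions) with the same norm. -/
def RKHSle {H₁ H₂ V : Type*} [NormedAddCommGroup H₁] [InnerProductSpace ℂ H₁]
    [NormedAddCommGroup H₂] [InnerProductSpace ℂ H₂] [AddCommGroup V] [Module ℂ V]
    (J₁ : H₁ →ₗ[ℂ] V) (J₂ : H₂ →ₗ[ℂ] V) : Prop :=
  ∀ f : H₁, ∃ g : H₂, J₂ g = J₁ f ∧ ‖g‖ = ‖f‖

/-- `K` is an `𝓛(Λ)`-valued reproducing kernel: hermitian and positive-definite. -/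
def IsOpKernel [CompleteSpace Λ] (K : X → X → Λ →L[ℂ] Λ) : Prop :=
  (∀ x y, K x y = ContinuousLinearMap.adjoint (K y x)) ∧
    ∀ (n : ℕ) (x : Fin n → X) (ξ : Fin n → Λ),
      0 ≤ ∑ j, ∑ k, ⟪ξ k, K (x j) (x k) (ξ j)⟫

/-- `k` is a scalar-valued reproducing kernel: hermitian and positive-definite. -/
def IsScalarKernel {Y : Type*} (k : Y → Y → ℂ) : Prop :=
  (∀ y z, k z y = starRingEnd ℂ (k y z)) ∧
    ∀ (n : ℕ) (y : Fin n → Y) (c : Fin n → ℂ),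
      0 ≤ ∑ j, ∑ l, starRingEnd ℂ (c l) * c j * k (y j) (y l)

/-- The relation `A ⪯ B` for positive operators. -/
def OpPrec (A B : Λ →L[ℂ] Λ) : Prop :=
  ∀ ξ : Λ, ∃ η : Λ, A ξ = B η ∧ ⟪ξ, A ξ⟫ = ⟪η, B η⟫

end Defs

section Aux

variable {Λ : Type*} [NormedAddCommGroup Λ] [InnerProductSpace ℂ Λ] [CompleteSpace Λ]

omit [CompleteSpace Λ] in
lemma aux_quad_congr {B : Λ →L[ℂ] Λ} (sB : ∀ x y : Λ, ⟪B x, y⟫ = ⟪x, B y⟫)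
    {u v : Λ} (h : B u = B v) : ⟪u, B u⟫ = ⟪v, B v⟫ := by
  have h0 : B (u - v) = 0 := by rw [map_sub, h, sub_self]
  have hu : u = (u - v) + v := by abel
  calc ⟪u, B u⟫ = ⟪(u - v) + v, B ((u - v) + v)⟫ := by rw [← hu]
    _ = ⟪u - v, B (u - v)⟫ + ⟪u - v, B v⟫ + (⟪v, B (u - v)⟫ + ⟪v, B v⟫) := by
        rw [map_add, inner_add_left, inner_add_right, inner_add_right]
    _ = ⟪v, B v⟫ := by
        rw [h0, inner_zero_right, inner_zero_right, ← sB, h0, inner_zero_left]; ring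

omit [CompleteSpace Λ] in
lemma aux_conj_swap {T : Λ →L[ℂ] Λ} (sT : ∀ x y : Λ, ⟪T x, y⟫ = ⟪x, T y⟫) (x y : Λ) :
    ⟪y, T x⟫ = starRingEnd ℂ ⟪x, T y⟫ := by
  rw [← sT y x, ← inner_conj_symm]

omit [CompleteSpace Λ] in
lemma aux_core {A B : Λ →L[ℂ] Λ}
    (sA : ∀ x y : Λ, ⟪A x, y⟫ = ⟪x, A y⟫) (sB : ∀ x y : Λ, ⟪B x, y⟫ = ⟪x, B y⟫)
    (hp : OpPrec A B) {ξ₁ ξ₂ η₁ η₂ : Λ}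
    (e1 : A ξ₁ = B η₁) (q1 : ⟪ξ₁, A ξ₁⟫ = ⟪η₁, B η₁⟫)
    (e2 : A ξ₂ = B η₂) (q2 : ⟪ξ₂, A ξ₂⟫ = ⟪η₂, B η₂⟫) :
    ⟪η₁, B η₂⟫ = ⟪ξ₁, A ξ₂⟫ := by
  obtain ⟨η₃, e3, q3⟩ := hp (ξ₁ + ξ₂)
  obtain ⟨η₄, e4, q4⟩ := hp (ξ₁ + Complex.I • ξ₂)
  have c3 : ⟪η₃, B η₃⟫ = ⟪η₁ + η₂, B (η₁ + η₂)⟫ :=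
    aux_quad_congr sB (by rw [← e3, map_add, map_add, e1, e2])
  have c4 : ⟪η₄, B η₄⟫ = ⟪η₁ + Complex.I • η₂, B (η₁ + Complex.I • η₂)⟫ :=
    aux_quad_congr sB (by rw [← e4, map_add, map_add, _root_.map_smul, _root_.map_smul, e1, e2])
  have e_re : ⟪ξ₁, A ξ₂⟫ + starRingEnd ℂ ⟪ξ₁, A ξ₂⟫
      = ⟪η₁, B η₂⟫ + starRingEnd ℂ ⟪η₁, B η₂⟫ := by
    have h := q3.trans c3
    simp only [map_add, inner_add_left, inner_add_right] at h
    rw [aux_conj_swap sA ξ₁ ξ₂, aux_conj_swap sB η₁ η₂] at h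
    linear_combination h - q1 - q2
  have e_im : ⟪ξ₁, A ξ₂⟫ - starRingEnd ℂ ⟪ξ₁, A ξ₂⟫
      = ⟪η₁, B η₂⟫ - starRingEnd ℂ ⟪η₁, B η₂⟫ := by
    have h := q4.trans c4
    simp only [map_add, _root_.map_smul, inner_add_left, inner_add_right, inner_smul_left,
      inner_smul_right, Complex.conj_I] at h
    rw [aux_conj_swap sA ξ₁ ξ₂, aux_conj_swap sB η₁ η₂] at h
    linear_combination (-Complex.I) * h + Complex.I * q1 - Complex.I ^ 3 * q2 +
      (⟪ξ₁, A ξ₂⟫ - starRingEnd ℂ ⟪ξ₁, A ξ₂⟫ - ⟪η₁, B η₂⟫ +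
        starRingEnd ℂ ⟪η₁, B η₂⟫) * Complex.I_sq
  linear_combination (-(1:ℂ)/2) * e_re + (-(1:ℂ)/2) * e_im

omit [CompleteSpace Λ] in
lemma aux_ker {A : Λ →L[ℂ] Λ} (sA : ∀ x y : Λ, ⟪A x, y⟫ = ⟪x, A y⟫)
    {v : Λ} (hv : ∀ u ∈ Set.range A, ⟪v, u⟫ = 0) : A v = 0 := by
  have h : ⟪A v, A v⟫ = 0 := by
    rw [sA v (A v)]
    exact hv _ ⟨A v, rfl⟩
  exact inner_self_eq_zero.mp h

end Aux

/-- For positive operators  with closed range on a separable Hilbert space,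
 iff  and  on  (the latter phrased via the
characterization of the orthogonal projection: whenever  and  with
, , the difference  is orthogonal to ). -/
theorem stmt0 {Λ : Type*} [NormedAddCommGroup Λ] [InnerProductSpace ℂ Λ] [CompleteSpace Λ]
    [TopologicalSpace.SeparableSpace Λ]
    (A B : Λ →L[ℂ] Λ) (hA : A.IsPositive) (hB : B.IsPositive)
    (hrA : IsClosed (Set.range A)) (hrB : IsClosed (Set.range B)) :
    OpPrec A B ↔
      Set.range A ⊆ Set.range B ∧
        ∀ ξ η ζ : Λ, ξ ∈ Set.range A → η ∈ Set.range B → ζ ∈ Set.range A →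
          B η = ξ → A ζ = ξ → ∀ w ∈ Set.range A, ⟪η - ζ, w⟫ = 0 := by
  have sA : ∀ x y : Λ, ⟪A x, y⟫ = ⟪x, A y⟫ := fun x y => hA.1 x y
  have sB : ∀ x y : Λ, ⟪B x, y⟫ = ⟪x, B y⟫ := fun x y => hB.1 x y
  constructor
  · intro hp
    refine ⟨?_, ?_⟩
    · rintro x ⟨ξ, rfl⟩
      obtain ⟨η, e, -⟩ := hp ξ
      exact ⟨η, e.symm⟩
    · rintro x η ζ ⟨ξ₁, rfl⟩ - - hBη hAζ w ⟨ξ₂, rfl⟩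
      obtain ⟨η₁, e1, q1⟩ := hp ξ₁
      obtain ⟨η₂, e2, q2⟩ := hp ξ₂
      have key : ⟪η₁, B η₂⟫ = ⟪ξ₁, A ξ₂⟫ := aux_core sA sB hp e1 q1 e2 q2
      have hBdiff : B (η - η₁) = 0 := by rw [map_sub, hBη, e1, sub_self]
      have h1 : ⟪η, A ξ₂⟫ = ⟪ξ₁, A ξ₂⟫ := by
        have hz : ⟪η - η₁, B η₂⟫ = 0 := by rw [← sB, hBdiff, inner_zero_left]
        have hη : η₁ + (η - η₁) = η := by abel
        calc ⟪η, A ξ₂⟫ = ⟪η₁ + (η - η₁), B η₂⟫ := by rw [e2, hη]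
          _ = ⟪η₁, B η₂⟫ + ⟪η - η₁, B η₂⟫ := inner_add_left _ _ _
          _ = ⟪ξ₁, A ξ₂⟫ := by rw [hz, key, add_zero]
      have h2 : ⟪ζ, A ξ₂⟫ = ⟪ξ₁, A ξ₂⟫ := by
        rw [← sA, hAζ, sA]
      rw [inner_sub_left, h1, h2, sub_self]
  · rintro ⟨hsub, hperp⟩ ξ
    set SA : Submodule ℂ Λ := LinearMap.range (A : Λ →ₗ[ℂ] Λ) with hSA
    set SB : Submodule ℂ Λ := LinearMap.range (B : Λ →ₗ[ℂ] Λ) with hSB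
    have hSAset : (SA : Set Λ) = Set.range A := LinearMap.coe_range _
    have hSBset : (SB : Set Λ) = Set.range B := LinearMap.coe_range _
    haveI : CompleteSpace SA := (hSAset ▸ hrA).completeSpace_coe
    haveI : CompleteSpace SB := (hSBset ▸ hrB).completeSpace_coe
    -- ζ : projection of ξ onto range A
    set ζ : Λ := (SA.orthogonalProjectionOnto ξ : Λ) with hζ
    have hζmem : ζ ∈ Set.range A := by
      rw [← hSAset]; exact (SA.orthogonalProjectionOnto ξ).2
    have hdiff : ξ - ζ ∈ SAᗮ := Submodule.sub_starProjection_mem_orthogonal ξ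
    have hdiff' : ∀ u ∈ Set.range A, ⟪ξ - ζ, u⟫ = 0 := by
      intro u hu
      exact (Submodule.mem_orthogonal' SA _).mp hdiff u hu
    have hAd : A (ξ - ζ) = 0 := aux_ker sA hdiff'
    have hAζ : A ζ = A ξ := by
      have h := map_sub A ξ ζ
      rw [hAd] at h
      exact (sub_eq_zero.mp h.symm).symm
    -- η : projection of a preimage of A ξ onto range B
    obtain ⟨η₀, hη₀⟩ := hsub ⟨ξ, rfl⟩
    set η : Λ := (SB.orthogonalProjectionOnto η₀ : Λ) with hη
    have hηmem : η ∈ Set.range B := by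
      rw [← hSBset]; exact (SB.orthogonalProjectionOnto η₀).2
    have hdiffB : η₀ - η ∈ SBᗮ := Submodule.sub_starProjection_mem_orthogonal η₀
    have hBd : B (η₀ - η) = 0 := by
      refine aux_ker sB fun u hu => ?_
      exact (Submodule.mem_orthogonal' SB _).mp hdiffB u hu
    have hBη : B η = A ξ := by
      have h := map_sub B η₀ η
      rw [hBd] at h
      rw [← sub_eq_zero.mp h.symm, ← hη₀]
    have hperp' := hperp (A ξ) η ζ ⟨ξ, rfl⟩ hηmem hζmem hBη hAζ
    refine ⟨η, hBη.symm, ?_⟩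
    have hz1 : ⟪η - ζ, A ζ⟫ = 0 := hperp' (A ζ) ⟨ζ, rfl⟩
    have hz2 : ⟪ξ - ζ, A ζ⟫ = 0 := hdiff' (A ζ) ⟨ζ, rfl⟩
    have l1 : ⟪ξ, A ξ⟫ = ⟪ζ, A ζ⟫ := by
      have hξ : ζ + (ξ - ζ) = ξ := by abel
      calc ⟪ξ, A ξ⟫ = ⟪ζ + (ξ - ζ), A ζ⟫ := by rw [← hAζ, hξ]
        _ = ⟪ζ, A ζ⟫ + ⟪ξ - ζ, A ζ⟫ := inner_add_left _ _ _
        _ = ⟪ζ, A ζ⟫ := by rw [hz2, add_zero]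
    have l2 : ⟪η, B η⟫ = ⟪ζ, A ζ⟫ := by
      have hη' : ζ + (η - ζ) = η := by abel
      calc ⟪η, B η⟫ = ⟪ζ + (η - ζ), A ζ⟫ := by rw [hBη, ← hAζ, hη']
        _ = ⟪ζ, A ζ⟫ + ⟪η - ζ, A ζ⟫ := inner_add_left _ _ _
        _ = ⟪ζ, A ζ⟫ := by rw [hz1, add_zero]
    rw [l1, l2]
end
end

section
/- Let Λ be a Hilbert space and A, B bounded positive operators on Λ with closed range, with the relation A ⪯ B meaning: for every ξ ∈ Λ there exists η ∈ Λ with Aξ = Bη and (Aξ, ξ) = (Bη, η). If A is surjective, then A ⪯ B if and only if A = B. -/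
open MeasureTheory ContinuousLinearMap
open scoped ComplexOrder

noncomputable section

local notation "⟪" x ", " y "⟫" => @inner ℂ _ _ x y

/-- If A is surjective (and A, B positive with closed range), then A ⪯ B iff A = B. -/
theorem stmt1 {Λ : Type*} [NormedAddCommGroup Λ] [InnerProductSpace ℂ Λ] [CompleteSpace Λ]
    (A B : Λ →L[ℂ] Λ) (hA : A.IsPositive) (hB : B.IsPositive)
    (hrA : IsClosed (Set.range A)) (hrB : IsClosed (Set.range B))
    (hsurj : Function.Surjective A) :
    OpPrec A B ↔ A = B := by
  constructor
  · intro h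
    -- B is surjective
    have hBsurj : Function.Surjective B := by
      intro ζ
      obtain ⟨ξ, rfl⟩ := hsurj ζ
      obtain ⟨η, hη, -⟩ := h ξ
      exact ⟨η, hη.symm⟩
    -- injectivity of a self-adjoint surjective operator
    have key : ∀ (T : Λ →L[ℂ] Λ), T.IsPositive → Function.Surjective T →
        Function.Injective T := fun T hT hTs => by
      refine (LinearMap.ker_eq_bot (f := (T : Λ →ₗ[ℂ] Λ))).mp ((Submodule.eq_bot_iff _).mpr ?_)
      intro ξ hξ
      rw [LinearMap.mem_ker, ContinuousLinearMap.coe_coe] at hξ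
      have : ∀ ζ : Λ, ⟪ζ, ξ⟫ = 0 := by
        intro ζ
        obtain ⟨η, rfl⟩ := hTs ζ
        rw [← hT.isSelfAdjoint.adjoint_eq, ContinuousLinearMap.adjoint_inner_left, hξ, inner_zero_right]
      exact inner_self_eq_zero.mp (this ξ)
    have hAinj := key A hA hsurj
    have hBinj := key B hB hBsurj
    set eA := ContinuousLinearEquiv.ofBijective A ((LinearMap.ker_eq_bot (f := (A : Λ →ₗ[ℂ] Λ))).mpr hAinj)
      (LinearMap.range_eq_top.mpr hsurj) with heA
    set eB := ContinuousLinearEquiv.ofBijective B ((LinearMap.ker_eq_bot (f := (B : Λ →ₗ[ℂ] Λ))).mpr hBinj)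
      (LinearMap.range_eq_top.mpr hBsurj) with heB
    have hAe : ∀ x, A (eA.symm x) = x := fun x => eA.apply_symm_apply x
    have hBe : ∀ x, B (eB.symm x) = x := fun x => eB.apply_symm_apply x
    have hinv : (eA.symm : Λ →ₗ[ℂ] Λ) = (eB.symm : Λ →ₗ[ℂ] Λ) := by
      rw [← ext_inner_map]
      intro ζ
      obtain ⟨η, hη1, hη2⟩ := h (eA.symm ζ)
      have hηeq : η = eB.symm ζ := by
        apply hBinj
        rw [hBe, ← hη1, hAe]
      show ⟪(eA.symm ζ : Λ), ζ⟫ = ⟪(eB.symm ζ : Λ), ζ⟫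
      calc ⟪(eA.symm ζ : Λ), ζ⟫ = ⟪(eA.symm ζ : Λ), A (eA.symm ζ)⟫ := by rw [hAe]
        _ = ⟪η, B η⟫ := hη2
        _ = ⟪(eB.symm ζ : Λ), ζ⟫ := by rw [hηeq, hBe]
    ext ξ
    have : eA.symm (A ξ) = eB.symm (A ξ) := LinearMap.congr_fun hinv (A ξ)
    calc A ξ = B (eB.symm (A ξ)) := by rw [hBe]
      _ = B (eA.symm (A ξ)) := by rw [this]
      _ = B ξ := by rw [show eA.symm (A ξ) = ξ from eA.symm_apply_apply ξ]
  · rintro rfl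
    exact fun ξ => ⟨ξ, rfl, rfl⟩
end
end

section
/- Let A, B ∈ 𝓛₊(Λ) with A ⪯ B (i.e., for each ξ there is η with Aξ = Bη and (Aξ, ξ) = (Bη, η)), where A and B have closed range. Then for all ξ, ξ' ∈ Λ, setting η_ξ := B⁻¹Aξ, one has (Aξ', ξ) = (Bη_{ξ'}, η_ξ); in particular A B⁻¹ A = A on ran(A). -/
open MeasureTheory ContinuousLinearMap
open scoped ComplexOrder

noncomputable section

local notation "⟪" x ", " y "⟫" => @inner ℂ _ _ x y

section AuxCS
variable {Λ : Type*} [NormedAddCommGroup Λ] [InnerProductSpace ℂ Λ] [CompleteSpace Λ]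

lemma posCS {T : Λ →L[ℂ] Λ} (hT : T.IsPositive) (x y : Λ) :
    ‖⟪x, T y⟫‖ * ‖⟪y, T x⟫‖ ≤ RCLike.re ⟪x, T x⟫ * RCLike.re ⟪y, T y⟫ := by
  have symT := hT.isSelfAdjoint.isSymmetric
  let c : PreInnerProductSpace.Core ℂ Λ :=
    { inner := fun a b => ⟪a, T b⟫
      conj_inner_symm := fun a b => (inner_conj_symm (T a) b).trans (symT a b)
      re_inner_nonneg := fun a => by
        have := hT.2 a
        rwa [reApplyInnerSelf, inner_re_symm] at this
      add_left := fun a b z => inner_add_left _ _ _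
      smul_left := fun a b r => inner_smul_left _ _ _ }
  exact @InnerProductSpace.Core.inner_mul_inner_self_le ℂ Λ _ _ _ c x y

end AuxCS

/-- If A ⪯ B (positive, closed range), then for all ξ, ξ', with η_ξ := B⁻¹Aξ
(encoded as any η in ran B with Bη = Aξ) one has (Aξ',ξ) = (Bη_{ξ'}, η_ξ); in particular
A B⁻¹ A = A on ran A. -/
theorem stmt2 {Λ : Type*} [NormedAddCommGroup Λ] [InnerProductSpace ℂ Λ] [CompleteSpace Λ]
    (A B : Λ →L[ℂ] Λ) (hA : A.IsPositive) (hB : B.IsPositive)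
    (hrA : IsClosed (Set.range A)) (hrB : IsClosed (Set.range B))
    (h : OpPrec A B) :
    (∀ ξ ξ' η η' : Λ, η ∈ Set.range B → η' ∈ Set.range B → B η = A ξ → B η' = A ξ' →
        ⟪ξ, A ξ'⟫ = ⟪η, B η'⟫) ∧
      ∀ ξ ∈ Set.range A, ∀ η ∈ Set.range B, B η = A ξ → A η = A ξ := by
  have symA := hA.isSelfAdjoint.isSymmetric
  have symB := hB.isSelfAdjoint.isSymmetric
  -- quadratic identity for all valid (ξ, η) pairs
  have quad : ∀ ξ η : Λ, B η = A ξ → ⟪ξ, A ξ⟫ = ⟪η, B η⟫ := by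
    intro ξ η hη
    obtain ⟨η₀, h1, h2⟩ := h ξ
    have hBB : B η = B η₀ := by rw [hη, h1]
    have key : ⟪η - η₀, B η₀⟫ = 0 :=
      calc ⟪η - η₀, B η₀⟫ = ⟪B (η - η₀), η₀⟫ := (symB (η - η₀) η₀).symm
        _ = ⟪(0 : Λ), η₀⟫ := by rw [map_sub, hBB, sub_self]
        _ = 0 := inner_zero_left _
    have h5 := inner_sub_left (𝕜 := ℂ) η η₀ (B η₀)
    rw [key] at h5
    have h3 : ⟪η, B η₀⟫ = ⟪η₀, B η₀⟫ := by linear_combination -h5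
    rw [h2, ← h3, ← hBB]
  -- polarization
  have part1 : ∀ ξ ξ' η η' : Λ, B η = A ξ → B η' = A ξ' → ⟪ξ, A ξ'⟫ = ⟪η, B η'⟫ := by
    intro ξ ξ' η η' hη hη'
    have key : ∀ c : ℂ, c * ⟪ξ, A ξ'⟫ + (starRingEnd ℂ c) * ⟪ξ', A ξ⟫
        = c * ⟪η, B η'⟫ + (starRingEnd ℂ c) * ⟪η', B η⟫ := by
      intro c
      have hq := quad (ξ + c • ξ') (η + c • η') (by simp [map_add, _root_.map_smul, hη, hη'])
      have hq1 := quad ξ η hη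
      have hq2 := quad ξ' η' hη'
      simp only [map_add, _root_.map_smul, inner_add_left, inner_add_right, inner_smul_left,
        inner_smul_right] at hq
      linear_combination hq - hq1 - (starRingEnd ℂ c) * c * hq2
    have k1 := key 1
    have kI := key Complex.I
    simp only [map_one, one_mul, Complex.conj_I, neg_mul] at k1 kI
    linear_combination (k1 - Complex.I * kI) / 2 +
      ((⟪ξ, A ξ'⟫ - ⟪η, B η'⟫ + ⟪η', B η⟫ - ⟪ξ', A ξ⟫) / 2) * Complex.I_sq
  refine ⟨fun ξ ξ' η η' _ _ hη hη' => part1 ξ ξ' η η' hη hη', ?_⟩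
  -- A ≤ B as quadratic forms
  have formLe : ∀ x : Λ, RCLike.re ⟪x, A x⟫ ≤ RCLike.re ⟪x, B x⟫ := by
    intro x
    obtain ⟨ν, h1, h2⟩ := h x
    set t : ℝ := RCLike.re ⟪x, A x⟫ with ht
    set s : ℝ := RCLike.re ⟪x, B x⟫ with hs
    have ht0 : 0 ≤ t := by
      have := hA.2 x; rwa [reApplyInnerSelf, inner_re_symm] at this
    have hs0 : 0 ≤ s := by
      have := hB.2 x; rwa [reApplyInnerSelf, inner_re_symm] at this
    have hsw : starRingEnd ℂ ⟪x, B ν⟫ = ⟪ν, B x⟫ :=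
      (inner_conj_symm (B ν) x).trans (symB ν x)
    have hnn : ‖⟪ν, B x⟫‖ = ‖⟪x, B ν⟫‖ := by rw [← hsw, RCLike.norm_conj]
    have hr : RCLike.re ⟪ν, B ν⟫ = t := by rw [ht, h2]
    have hcs := posCS hB x ν
    have hcs2 : ‖⟪x, B ν⟫‖ * ‖⟪x, B ν⟫‖ ≤ s * t := by
      calc ‖⟪x, B ν⟫‖ * ‖⟪x, B ν⟫‖ = ‖⟪x, B ν⟫‖ * ‖⟪ν, B x⟫‖ := by rw [hnn]
        _ ≤ RCLike.re ⟪x, B x⟫ * RCLike.re ⟪ν, B ν⟫ := hcs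
        _ = s * t := by rw [← hs, hr]
    have htle : t ≤ ‖⟪x, B ν⟫‖ := by
      calc t = RCLike.re ⟪x, B ν⟫ := by rw [ht, h1]
        _ ≤ ‖⟪x, B ν⟫‖ := RCLike.re_le_norm _
    nlinarith [mul_self_le_mul_self ht0 htle]
  rintro ξ hξ η hη hBη
  -- show A (η - ξ) = 0
  have hq : ⟪ξ, A ξ⟫ = ⟪η, B η⟫ := quad ξ η hBη
  have e1 : ⟪η, A ξ⟫ = ⟪η, B η⟫ := by rw [← hBη]
  have e2 : ⟪ξ, A η⟫ = ⟪η, B η⟫ :=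
    calc ⟪ξ, A η⟫ = ⟪A ξ, η⟫ := (symA ξ η).symm
      _ = ⟪B η, η⟫ := by rw [hBη]
      _ = ⟪η, B η⟫ := symB η η
  have expand : ⟪η - ξ, A (η - ξ)⟫ = ⟪η, A η⟫ - ⟪η, B η⟫ := by
    simp only [map_sub, inner_sub_left, inner_sub_right]
    linear_combination -e1 - e2 + hq
  have hre : RCLike.re ⟪η - ξ, A (η - ξ)⟫ = 0 := by
    have h1 : RCLike.re ⟪η - ξ, A (η - ξ)⟫
        = RCLike.re ⟪η, A η⟫ - RCLike.re ⟪η, B η⟫ := by rw [expand, map_sub]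
    have h2 := formLe η
    have h3 : 0 ≤ RCLike.re ⟪η - ξ, A (η - ξ)⟫ := by
      have := hA.2 (η - ξ); rwa [reApplyInnerSelf, inner_re_symm] at this
    linarith
  have hAμ : A (η - ξ) = 0 := by
    have key : ∀ x : Λ, ⟪x, A (η - ξ)⟫ = 0 := by
      intro x
      have hcs := posCS hA x (η - ξ)
      have hsw : starRingEnd ℂ ⟪x, A (η - ξ)⟫ = ⟪η - ξ, A x⟫ :=
        (inner_conj_symm (A (η - ξ)) x).trans (symA (η - ξ) x)
      have hnn : ‖⟪η - ξ, A x⟫‖ = ‖⟪x, A (η - ξ)⟫‖ := by rw [← hsw, RCLike.norm_conj]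
      rw [hnn, hre, mul_zero] at hcs
      have h0 : ‖⟪x, A (η - ξ)⟫‖ = 0 := by nlinarith [norm_nonneg (⟪x, A (η - ξ)⟫)]
      exact norm_eq_zero.mp h0
    have := key (A (η - ξ))
    rwa [inner_self_eq_zero] at this
  have : A η - A ξ = 0 := by rw [← map_sub]; exact hAμ
  exact sub_eq_zero.mp this
end
end

section
/- Let W be a Hilbert space and Φ: X → 𝓛(Λ, W) a feature map, and define K(x,y) := Φ(y)* Φ(x). Then K is an 𝓛(Λ)-valued reproducing kernel on X, its RKHS is H_K = {Φ(·)* u : u ∈ W}, and the inner product satisfies (Φ(·)*u, Φ(·)*v)_{H_K} = (P_Φ u, P_Φ v)_W, where P_Φ is the orthogonal projection of W onto the closed linear span W_Φ of {Φ(x)ξ : x ∈ X, ξ ∈ Λ}. -/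
open MeasureTheory ContinuousLinearMap
open scoped ComplexOrder

noncomputable section

local notation "⟪" x ", " y "⟫" => @inner ℂ _ _ x y

/-- For a feature map Φ : X → 𝓛(Λ,W), K(x,y) := Φ(y)*Φ(x) is an operator-valued
reproducing kernel, its RKHS is exactly {Φ(·)*u : u ∈ W}, and
(Φ(·)*u, Φ(·)*v)_{H_K} = (P_Φ u, P_Φ v)_W, where P_Φ is the orthogonal projection onto the
closed span W_Φ of {Φ(x)ξ} (the projections P_Φ u, P_Φ v being characterized as the elements
u', v' of W_Φ with u − u', v − v' orthogonal to W_Φ). -/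
theorem stmt6 {X Λ W : Type*} [NormedAddCommGroup Λ] [InnerProductSpace ℂ Λ] [CompleteSpace Λ]
    [NormedAddCommGroup W] [InnerProductSpace ℂ W] [CompleteSpace W]
    (Φ : X → Λ →L[ℂ] W) (K : X → X → Λ →L[ℂ] Λ)
    (hKdef : ∀ x y, K x y = ContinuousLinearMap.adjoint (Φ y) ∘L Φ x)
    {H : Type*} [NormedAddCommGroup H] [InnerProductSpace ℂ H] [CompleteSpace H]
    (J : H →ₗ[ℂ] (X → Λ)) (kf : X → Λ → H) (hH : IsVRKHS K H J kf) :
    IsOpKernel K ∧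
      Set.range ⇑J = {F | ∃ u : W, F = fun x => ContinuousLinearMap.adjoint (Φ x) u} ∧
      ∀ (u v : W) (g h : H),
        (J g = fun x => ContinuousLinearMap.adjoint (Φ x) u) →
        (J h = fun x => ContinuousLinearMap.adjoint (Φ x) v) →
        ∀ u' v' : W,
          u' ∈ (Submodule.span ℂ (Set.range fun p : X × Λ => Φ p.1 p.2)).topologicalClosure →
          v' ∈ (Submodule.span ℂ (Set.range fun p : X × Λ => Φ p.1 p.2)).topologicalClosure →
          (∀ w ∈ (Submodule.span ℂ (Set.range fun p : X × Λ => Φ p.1 p.2)).topologicalClosure,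
            ⟪u - u', w⟫ = 0) →
          (∀ w ∈ (Submodule.span ℂ (Set.range fun p : X × Λ => Φ p.1 p.2)).topologicalClosure,
            ⟪v - v', w⟫ = 0) →
          ⟪g, h⟫ = ⟪u', v'⟫ := by
  classical
  -- Notation
  set N : Submodule ℂ W := Submodule.span ℂ (Set.range fun p : X × Λ => Φ p.1 p.2) with hN
  set M : Submodule ℂ H := Submodule.span ℂ (Set.range fun p : X × Λ => kf p.1 p.2) with hM
  -- inner products of kernel elements match inner products of feature vectors
  have hpair : ∀ (x : X) (ξ : Λ) (y : X) (η : Λ),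
      ⟪kf y η, kf x ξ⟫ = ⟪Φ y η, Φ x ξ⟫ := by
    intro x ξ y η
    have h1 := hH.repro (kf x ξ) y η
    have h2 := congrFun (hH.kfun_eq x ξ) y
    rw [h1, h2, hKdef]
    simp only [ContinuousLinearMap.comp_apply]
    rw [ContinuousLinearMap.adjoint_inner_right]
  -- Part 1 : K is an operator-valued kernel
  have hker : IsOpKernel K := by
    constructor
    · intro x y
      rw [hKdef, hKdef, ContinuousLinearMap.adjoint_comp, ContinuousLinearMap.adjoint_adjoint]
    · intro n x ξ
      have hterm : ∀ j k, ⟪ξ k, K (x j) (x k) (ξ j)⟫ = ⟪Φ (x k) (ξ k), Φ (x j) (ξ j)⟫ := by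
        intro j k
        rw [hKdef]
        simp only [ContinuousLinearMap.comp_apply]
        rw [ContinuousLinearMap.adjoint_inner_right]
      have hsum : ∑ j, ∑ k, ⟪ξ k, K (x j) (x k) (ξ j)⟫
          = ⟪∑ k, Φ (x k) (ξ k), ∑ j, Φ (x j) (ξ j)⟫ := by
        simp_rw [hterm]
        rw [inner_sum]
        exact Finset.sum_congr rfl fun j _ => (sum_inner _ _ _).symm
      rw [hsum, inner_self_eq_norm_sq_to_K, ← RCLike.ofReal_pow]
      exact RCLike.ofReal_nonneg.mpr (sq_nonneg _)
  -- membership of generators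
  have hΦmem : ∀ (x : X) (ξ : Λ), Φ x ξ ∈ N := fun x ξ =>
    Submodule.subset_span ⟨(x, ξ), rfl⟩
  have hkfmem : ∀ (x : X) (ξ : Λ), kf x ξ ∈ M := fun x ξ =>
    Submodule.subset_span ⟨(x, ξ), rfl⟩
  have hΦcl : ∀ (x : X) (ξ : Λ), Φ x ξ ∈ N.topologicalClosure := fun x ξ =>
    N.le_topologicalClosure (hΦmem x ξ)
  -- uniqueness in the closure of N
  have huniq : ∀ w₁ w₂ : W, w₁ ∈ N.topologicalClosure → w₂ ∈ N.topologicalClosure →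
      (∀ (x : X) (ξ : Λ), ⟪Φ x ξ, w₁⟫ = ⟪Φ x ξ, w₂⟫) → w₁ = w₂ := by
    intro w₁ w₂ h1 h2 hch
    have hsub : w₁ - w₂ ∈ N.topologicalClosure := sub_mem h1 h2
    have hzero : ∀ u ∈ N, ⟪u, w₁ - w₂⟫ = 0 := by
      intro u hu
      induction hu using Submodule.span_induction with
      | mem u hu =>
        obtain ⟨⟨x, ξ⟩, rfl⟩ := hu
        beta_reduce
        rw [inner_sub_right, hch, sub_self]
      | zero => simp
      | add u v _ _ hu hv => rw [inner_add_left, hu, hv, add_zero]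
      | smul c u _ hu => rw [inner_smul_left, hu, mul_zero]
    have hclosed : IsClosed {v : W | ⟪v, w₁ - w₂⟫ = 0} :=
      isClosed_eq (continuous_id.inner continuous_const) continuous_const
    have hcl : (N.topologicalClosure : Set W) ⊆ {v : W | ⟪v, w₁ - w₂⟫ = 0} := by
      rw [Submodule.topologicalClosure_coe]
      exact closure_minimal hzero hclosed
    have h0 : ⟪w₁ - w₂, w₁ - w₂⟫ = 0 := hcl hsub
    rw [inner_self_eq_zero, sub_eq_zero] at h0
    exact h0
  -- density of M
  have hMdense : Dense (M : Set H) := by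
    have htop : M.topologicalClosure = ⊤ := by
      rw [Submodule.topologicalClosure_eq_top_iff, Submodule.eq_bot_iff]
      intro f hf
      have hz : ∀ (x : X) (ξ : Λ), ⟪ξ, J f x⟫ = 0 := by
        intro x ξ
        rw [← hH.repro]
        exact (Submodule.mem_orthogonal M f).mp hf _ (hkfmem x ξ)
      have hJ0 : J f = 0 := by
        funext x
        have := hz x (J f x)
        rwa [inner_self_eq_zero] at this
      have := hH.inj (by rw [hJ0, map_zero] : J f = J 0)
      simpa using this
    have : closure (M : Set H) = Set.univ := by
      rw [← Submodule.topologicalClosure_coe, htop]; rfl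
    rw [dense_iff_closure_eq]; exact this
  -- existence of witnesses on M
  have hex : ∀ f : H, f ∈ M → ∃ w : W, w ∈ N ∧
      ∀ (x : X) (ξ : Λ), ⟪Φ x ξ, w⟫ = ⟪kf x ξ, f⟫ := by
    intro f hf
    induction hf using Submodule.span_induction with
    | mem f hf =>
      obtain ⟨⟨x₀, ξ₀⟩, rfl⟩ := hf
      exact ⟨Φ x₀ ξ₀, hΦmem x₀ ξ₀, fun x ξ => (hpair x₀ ξ₀ x ξ).symm⟩
    | zero => exact ⟨0, zero_mem _, by simp⟩
    | add f g _ _ hf hg =>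
      obtain ⟨w₁, hw₁, hc₁⟩ := hf
      obtain ⟨w₂, hw₂, hc₂⟩ := hg
      exact ⟨w₁ + w₂, add_mem hw₁ hw₂, fun x ξ => by
        rw [inner_add_right, inner_add_right, hc₁, hc₂]⟩
    | smul c f _ hf =>
      obtain ⟨w, hw, hc⟩ := hf
      exact ⟨c • w, Submodule.smul_mem _ c hw, fun x ξ => by
        rw [inner_smul_right, inner_smul_right, hc]⟩
  choose U₀ hU₀mem hU₀char using hex
  -- the value of U₀ is uniquely determined
  have hval : ∀ (f : H) (hf : f ∈ M) (w : W), w ∈ N →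
      (∀ (x : X) (ξ : Λ), ⟪Φ x ξ, w⟫ = ⟪kf x ξ, f⟫) → U₀ f hf = w := by
    intro f hf w hw hc
    exact huniq _ _ (N.le_topologicalClosure (hU₀mem f hf)) (N.le_topologicalClosure hw)
      (fun x ξ => by rw [hU₀char f hf x ξ, hc])
  set u₀ : M → W := fun m => U₀ (m : H) m.2 with hu₀
  have hu₀char : ∀ (m : M) (x : X) (ξ : Λ), ⟪Φ x ξ, u₀ m⟫ = ⟪kf x ξ, (m : H)⟫ :=
    fun m x ξ => hU₀char (m : H) m.2 x ξ
  have hu₀mem : ∀ m : M, u₀ m ∈ N := fun m => hU₀mem (m : H) m.2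
  -- linearity of u₀
  have hadd : ∀ m₁ m₂ : M, u₀ (m₁ + m₂) = u₀ m₁ + u₀ m₂ := by
    intro m₁ m₂
    refine huniq _ _ (N.le_topologicalClosure (hu₀mem _))
      (N.le_topologicalClosure (add_mem (hu₀mem m₁) (hu₀mem m₂))) fun x ξ => ?_
    rw [hu₀char, inner_add_right, hu₀char, hu₀char, Submodule.coe_add, inner_add_right]
  have hsmul : ∀ (c : ℂ) (m : M), u₀ (c • m) = c • u₀ m := by
    intro c m
    refine huniq _ _ (N.le_topologicalClosure (hu₀mem _))
      (N.le_topologicalClosure (Submodule.smul_mem _ c (hu₀mem m))) fun x ξ => ?_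
    rw [hu₀char, inner_smul_right, hu₀char, Submodule.coe_smul, inner_smul_right]
  -- u₀ preserves inner products
  have hinner₀ : ∀ m₁ m₂ : M, ⟪u₀ m₁, u₀ m₂⟫ = ⟪(m₁ : H), (m₂ : H)⟫ := by
    intro m₁ m₂
    have key : ∀ (f : H) (hf : f ∈ M), ⟪U₀ f hf, u₀ m₂⟫ = ⟪f, (m₂ : H)⟫ := by
      intro f hf
      induction hf using Submodule.span_induction with
      | mem f hf =>
        obtain ⟨⟨x₀, ξ₀⟩, rfl⟩ := hf
        beta_reduce
        rw [hval _ _ (Φ x₀ ξ₀) (hΦmem x₀ ξ₀) (fun x ξ => (hpair x₀ ξ₀ x ξ).symm)]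
        rw [hu₀char m₂ x₀ ξ₀]
      | zero =>
        rw [hval _ _ 0 (zero_mem _) (by simp)]
        simp
      | add f g hf hg ihf ihg =>
        rw [hval _ _ (U₀ f hf + U₀ g hg) (add_mem (hU₀mem f hf) (hU₀mem g hg))
          (fun x ξ => by rw [inner_add_right, hU₀char, hU₀char, inner_add_right])]
        rw [inner_add_left, ihf, ihg, inner_add_left]
      | smul c f hf ihf =>
        rw [hval _ _ (c • U₀ f hf) (Submodule.smul_mem _ c (hU₀mem f hf))
          (fun x ξ => by rw [inner_smul_right, hU₀char, inner_smul_right])]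
        rw [inner_smul_left, ihf, inner_smul_left]
    exact key (m₁ : H) m₁.2
  -- u₀ is norm preserving
  have hnorm₀ : ∀ m : M, ‖u₀ m‖ = ‖m‖ := by
    intro m
    have h := hinner₀ m m
    rw [inner_self_eq_norm_sq_to_K, inner_self_eq_norm_sq_to_K] at h
    have h2 : (‖u₀ m‖ : ℝ) ^ 2 = ‖(m : H)‖ ^ 2 := by exact_mod_cast h
    have h3 : ‖u₀ m‖ = ‖(m : H)‖ := by
      nlinarith [norm_nonneg (u₀ m), norm_nonneg ((m : H))]
    rw [h3, Submodule.norm_coe]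
  -- bundle u₀ as a continuous linear map and extend to H
  set U₀L : M →L[ℂ] W :=
    (LinearIsometry.mk ({ toFun := u₀, map_add' := hadd, map_smul' := hsmul } : M →ₗ[ℂ] W)
      hnorm₀).toContinuousLinearMap with hU₀L
  have hdr : DenseRange (M.subtypeL : M →L[ℂ] H) := by
    have : Set.range ((M.subtypeL : M →L[ℂ] H) : M → H) = (M : Set H) := by
      simp [Submodule.coe_subtypeL]
    rw [DenseRange, this]
    exact hMdense
  have hui : IsUniformInducing ((M.subtypeL : M →L[ℂ] H) : M → H) := by
    have : ((M.subtypeL : M →L[ℂ] H) : M → H) = ((↑) : M → H) := rfl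
    rw [this]
    exact isometry_subtype_coe.isUniformInducing
  set U : H →L[ℂ] W := U₀L.extend M.subtypeL with hU
  have hUm : ∀ m : M, U (m : H) = u₀ m := fun m =>
    ContinuousLinearMap.extend_eq U₀L hdr hui m
  -- extended characterization
  have hUchar : ∀ (f : H) (x : X) (ξ : Λ), ⟪Φ x ξ, U f⟫ = ⟪kf x ξ, f⟫ := by
    intro f x ξ
    have heq : Set.EqOn (fun f : H => ⟪Φ x ξ, U f⟫) (fun f : H => ⟪kf x ξ, f⟫)
        (M : Set H) := by
      intro g hg
      show ⟪Φ x ξ, U g⟫ = ⟪kf x ξ, g⟫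
      rw [show g = ((⟨g, hg⟩ : M) : H) from rfl, hUm ⟨g, hg⟩]
      exact hu₀char ⟨g, hg⟩ x ξ
    have := Continuous.ext_on hMdense
      (continuous_const.inner U.continuous) (continuous_const.inner continuous_id) heq
    exact congrFun this f
  -- extended isometry
  have hUnorm : ∀ f : H, ‖U f‖ = ‖f‖ := by
    intro f
    have heq : Set.EqOn (fun f : H => ‖U f‖) (fun f : H => ‖f‖) (M : Set H) := by
      intro g hg
      show ‖U g‖ = ‖g‖
      rw [show g = ((⟨g, hg⟩ : M) : H) from rfl, hUm ⟨g, hg⟩, hnorm₀, Submodule.norm_coe]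
    have := Continuous.ext_on hMdense (U.continuous.norm) continuous_norm heq
    exact congrFun this f
  -- extended membership
  have hUmem : ∀ f : H, U f ∈ N.topologicalClosure := by
    intro f
    have hsub : (M : Set H) ⊆ U ⁻¹' (N.topologicalClosure : Set W) := by
      intro g hg
      show U g ∈ N.topologicalClosure
      rw [show g = ((⟨g, hg⟩ : M) : H) from rfl, hUm ⟨g, hg⟩]
      exact N.le_topologicalClosure (hu₀mem _)
    have hcl : closure (M : Set H) ⊆ U ⁻¹' (N.topologicalClosure : Set W) :=
      closure_minimal hsub (N.isClosed_topologicalClosure.preimage U.continuous)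
    exact hcl (hMdense f)
  -- J in terms of U
  have hJU : ∀ (f : H) (x : X), J f x = ContinuousLinearMap.adjoint (Φ x) (U f) := by
    intro f x
    refine ext_inner_left ℂ fun ξ => ?_
    rw [← hH.repro, ContinuousLinearMap.adjoint_inner_right, hUchar]
  -- U as linear isometry, inner product preservation
  have hUinner : ∀ f g : H, ⟪U f, U g⟫ = ⟪f, g⟫ := by
    intro f g
    exact LinearIsometry.inner_map_map ⟨(U : H →ₗ[ℂ] W), hUnorm⟩ f g
  -- range of U contains the closure of N
  have hUrange : ∀ w ∈ N.topologicalClosure, ∃ f : H, U f = w := by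
    have hiso : Isometry ⇑U := AddMonoidHomClass.isometry_of_norm U hUnorm
    have hclosed : IsClosed (Set.range ⇑U) :=
      hiso.isUniformInducing.isComplete_range.isClosed
    have hN_le : N ≤ LinearMap.range (U : H →ₗ[ℂ] W) := by
      rw [hN, Submodule.span_le]
      rintro w ⟨⟨x, ξ⟩, rfl⟩
      refine ⟨kf x ξ, ?_⟩
      show U (kf x ξ) = Φ x ξ
      rw [show kf x ξ = ((⟨kf x ξ, hkfmem x ξ⟩ : M) : H) from rfl, hUm]
      exact hval _ _ (Φ x ξ) (hΦmem x ξ) (fun y η => (hpair x ξ y η).symm)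
    have hle : N.topologicalClosure ≤ LinearMap.range (U : H →ₗ[ℂ] W) := by
      refine Submodule.topologicalClosure_minimal _ hN_le ?_
      have : ((LinearMap.range (U : H →ₗ[ℂ] W)) : Set W) = Set.range ⇑U := by
        rw [LinearMap.coe_range]; rfl
      rw [this]
      exact hclosed
    intro w hw
    exact hle hw
  refine ⟨hker, ?_, ?_⟩
  · -- Part 2 : range of J
    ext F
    constructor
    · rintro ⟨f, rfl⟩
      exact ⟨U f, funext fun x => hJU f x⟩
    · rintro ⟨u, rfl⟩
      haveI : CompleteSpace N.topologicalClosure :=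
        N.isClosed_topologicalClosure.completeSpace_coe
      set u' : W := (N.topologicalClosure.orthogonalProjectionOnto u : W) with hu'
      obtain ⟨f, hf⟩ := hUrange u' (N.topologicalClosure.orthogonalProjectionOnto u).2
      refine ⟨f, funext fun x => ?_⟩
      rw [hJU f x, hf]
      refine ext_inner_left ℂ fun ξ => ?_
      rw [ContinuousLinearMap.adjoint_inner_right, ContinuousLinearMap.adjoint_inner_right]
      have horth : u - u' ∈ (N.topologicalClosure)ᗮ :=
        N.topologicalClosure.sub_starProjection_mem_orthogonal u
      have h0 : ⟪Φ x ξ, u - u'⟫ = 0 :=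
        (Submodule.mem_orthogonal _ _).mp horth _ (hΦcl x ξ)
      rw [inner_sub_right, sub_eq_zero] at h0
      exact h0.symm
  · -- Part 3 : inner product formula
    intro u v g h hg hh u' v' hu'mem hv'mem hou hov
    have hkey : ∀ (u : W) (g : H) (u' : W),
        (J g = fun x => ContinuousLinearMap.adjoint (Φ x) u) →
        u' ∈ N.topologicalClosure →
        (∀ w ∈ N.topologicalClosure, ⟪u - u', w⟫ = 0) → U g = u' := by
      intro u g u' hg hu'mem hou
      refine huniq _ _ (hUmem g) hu'mem fun x ξ => ?_
      have h1 : ⟪Φ x ξ, U g⟫ = ⟪Φ x ξ, u⟫ := by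
        rw [hUchar, hH.repro, hg, ContinuousLinearMap.adjoint_inner_right]
      have h2 : ⟪Φ x ξ, u - u'⟫ = 0 := by
        have := hou _ (hΦcl x ξ)
        have h3 : ⟪Φ x ξ, u - u'⟫ = starRingEnd ℂ ⟪u - u', Φ x ξ⟫ := (inner_conj_symm _ _).symm
        rw [h3, this, map_zero]
      rw [inner_sub_right, sub_eq_zero] at h2
      rw [h1, h2]
    have hg' : U g = u' := hkey u g u' hg hu'mem hou
    have hh' : U h = v' := hkey v h v' hh hv'mem hov
    rw [← hg', ← hh', hUinner]
end
end

section
/- Let K and G be 𝓛(Λ)-valued reproducing kernels on X given by feature maps Φ: X → 𝓛(Λ, W) and Φ': X → 𝓛(Λ, W') via K(x,y) = Φ(y)*Φ(x) and G(x,y) = Φ'(y)*Φ'(x), and assume the closed spans of {Φ(x)ξ} and {Φ'(x)ξ} equal W and W' respectively. Then H_K ⪯ H_G if and only if there exists a bounded linear operator T: W' → W with TΦ'(x) = Φ(x) for all x ∈ X and with T*: W → W' isometric. In this case, G ≠ K if and only if T is not injective. -/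
open MeasureTheory ContinuousLinearMap
open scoped ComplexOrder

noncomputable section

local notation "⟪" x ", " y "⟫" => @inner ℂ _ _ x y

section Aux
variable {X Λ W H : Type*} [NormedAddCommGroup Λ] [InnerProductSpace ℂ Λ] [CompleteSpace Λ]
  [NormedAddCommGroup W] [InnerProductSpace ℂ W] [CompleteSpace W]
  [NormedAddCommGroup H] [InnerProductSpace ℂ H] [CompleteSpace H]

lemma aux_feature_equiv (Φ : X → Λ →L[ℂ] W) (K : X → X → Λ →L[ℂ] Λ)
    (hKdef : ∀ x y, K x y = ContinuousLinearMap.adjoint (Φ y) ∘L Φ x)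
    (hdense : Dense ((Submodule.span ℂ (Set.range fun p : X × Λ => Φ p.1 p.2) : Submodule ℂ W) : Set W))
    (J : H →ₗ[ℂ] (X → Λ)) (kf : X → Λ → H) (h : IsVRKHS K H J kf) :
    ∃ V : W ≃ₗᵢ[ℂ] H, ∀ x ξ, V (Φ x ξ) = kf x ξ := by
  classical
  set v : X × Λ → W := fun p => Φ p.1 p.2 with hv
  set u : X × Λ → H := fun p => kf p.1 p.2 with hu
  have hgen : ∀ p q : X × Λ, ⟪u p, u q⟫ = ⟪v p, v q⟫ := by
    intro p q
    have h1 : ⟪u p, u q⟫ = ⟪p.2, J (kf q.1 q.2) p.1⟫ := h.repro _ _ _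
    have h2 : J (kf q.1 q.2) p.1 = K q.1 p.1 q.2 := by rw [h.kfun_eq]
    rw [h1, h2, hKdef]
    simp only [comp_apply]
    rw [ContinuousLinearMap.adjoint_inner_right]
  set F : ((X × Λ) →₀ ℂ) →ₗ[ℂ] W := Finsupp.linearCombination ℂ v with hF
  set L : ((X × Λ) →₀ ℂ) →ₗ[ℂ] H := Finsupp.linearCombination ℂ u with hL
  have hinner : ∀ c d, ⟪L c, L d⟫ = ⟪F c, F d⟫ := by
    intro c d
    simp only [hF, hL, Finsupp.linearCombination_apply, Finsupp.sum, sum_inner, inner_sum,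
      inner_smul_left, inner_smul_right, hgen]
  have hnorm0 : ∀ c, ‖L c‖ = ‖F c‖ := by
    intro c
    rw [@norm_eq_sqrt_re_inner ℂ, @norm_eq_sqrt_re_inner ℂ, hinner]
  have hker : LinearMap.ker F ≤ LinearMap.ker L := by
    intro c hc
    rw [LinearMap.mem_ker] at hc ⊢
    rw [← norm_eq_zero, hnorm0, hc, norm_zero]
  set V₀ : ↥(LinearMap.range F) →ₗ[ℂ] H :=
    ((LinearMap.ker F).liftQ L hker).comp F.quotKerEquivRange.symm.toLinearMap with hV₀def
  have hV₀ : ∀ c : (X × Λ) →₀ ℂ, ∀ hc, V₀ ⟨F c, hc⟩ = L c := by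
    intro c hc
    have he : F.quotKerEquivRange (Submodule.Quotient.mk c) = ⟨F c, hc⟩ := by
      apply Subtype.ext; simp
    simp only [hV₀def, LinearMap.comp_apply, LinearEquiv.coe_coe, ← he,
      LinearEquiv.symm_apply_apply, Submodule.liftQ_apply]
  have hV₀norm : ∀ y : ↥(LinearMap.range F), ‖V₀ y‖ = ‖y‖ := by
    rintro ⟨y, hy⟩
    obtain ⟨c, rfl⟩ := hy
    rw [hV₀ c ⟨c, rfl⟩, hnorm0]
    rfl
  set VLI : ↥(LinearMap.range F) →ₗᵢ[ℂ] H := ⟨V₀, hV₀norm⟩ with hVLI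
  have hrange : LinearMap.range F = Submodule.span ℂ (Set.range v) :=
    Finsupp.range_linearCombination ℂ (v := v)
  set e : ↥(LinearMap.range F) →L[ℂ] W := (LinearMap.range F).subtypeL with he
  have hdr : DenseRange e := by
    have : Set.range ⇑e = (LinearMap.range F : Set W) := Subtype.range_coe
    rw [DenseRange, this, hrange]
    exact hdense
  have hui : IsUniformInducing ⇑e := isUniformEmbedding_subtype_val.isUniformInducing
  set Vc : W →L[ℂ] H := VLI.toContinuousLinearMap.extend e with hVc
  have hVce : ∀ y : ↥(LinearMap.range F), Vc (e y) = VLI y :=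
    fun y => ContinuousLinearMap.extend_eq _ hdr hui y
  have hds : Dense ((LinearMap.range F : Submodule ℂ W) : Set W) := by
    rw [hrange]; exact hdense
  have hVcn : ∀ w : W, ‖Vc w‖ = ‖w‖ := by
    have hfg : (fun w : W => ‖Vc w‖) = fun w : W => ‖w‖ := by
      apply Continuous.ext_on hds (continuous_norm.comp Vc.continuous) continuous_norm
      intro w hw
      show ‖Vc (e ⟨w, hw⟩)‖ = ‖(e ⟨w, hw⟩ : W)‖
      rw [hVce]
      exact hV₀norm ⟨w, hw⟩
    exact fun w => congrFun hfg w
  set VL : W →ₗᵢ[ℂ] H := ⟨Vc.toLinearMap, hVcn⟩ with hVL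
  have hVLgen : ∀ x ξ, VL (Φ x ξ) = kf x ξ := by
    intro x ξ
    have h1 : Φ x ξ = F (Finsupp.single (x, ξ) 1) := by
      simp [hF, Finsupp.linearCombination_single, hv]
    have h2 : VL (Φ x ξ) = Vc (e ⟨Φ x ξ, h1 ▸ LinearMap.mem_range_self F _⟩) := rfl
    rw [h2, hVce, hVLI]
    show V₀ _ = kf x ξ
    rw [show (⟨Φ x ξ, _⟩ : ↥(LinearMap.range F)) = ⟨F (Finsupp.single (x, ξ) 1),
      LinearMap.mem_range_self F _⟩ from Subtype.ext h1, hV₀]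
    simp [hL, Finsupp.linearCombination_single, hu]
  -- dense span of kernel functions
  have hd2 : (Submodule.span ℂ (Set.range u)).topologicalClosure = ⊤ := by
    rw [Submodule.topologicalClosure_eq_top_iff]
    rw [Submodule.eq_bot_iff]
    intro f hf
    have hfo : ∀ p : X × Λ, ⟪u p, f⟫ = 0 := fun p =>
      hf (u p) (Submodule.subset_span ⟨p, rfl⟩)
    have hJ : J f = 0 := by
      funext x
      have : ∀ ξ : Λ, ⟪ξ, J f x⟫ = 0 := by
        intro ξ
        have := hfo (x, ξ)
        rwa [hu, h.repro] at this
      have := this (J f x)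
      rwa [inner_self_eq_zero] at this
    have : J f = J 0 := by rw [hJ, map_zero]
    exact h.inj this
  have hsurj : Function.Surjective VL := by
    intro g
    have hclosed : IsClosed (Set.range ⇑VL) :=
      (VL.isometry.isClosedEmbedding).isClosed_range
    have hsub : (Submodule.span ℂ (Set.range u) : Set H) ⊆ Set.range ⇑VL := by
      have : Set.range u ⊆ LinearMap.range VL.toLinearMap := by
        rintro _ ⟨⟨x, ξ⟩, rfl⟩
        exact ⟨Φ x ξ, hVLgen x ξ⟩
      intro w hw
      exact (Submodule.span_le.mpr this) hw
    have : (⊤ : Set H) ⊆ closure (Set.range ⇑VL) := by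
      have h1 : closure ((Submodule.span ℂ (Set.range u) : Submodule ℂ H) : Set H)
          = (⊤ : Set H) := by
        have := congrArg (fun s : Submodule ℂ H => (s : Set H)) hd2
        simpa [Submodule.topologicalClosure_coe] using this
      rw [← h1]
      exact closure_mono hsub
    have := this (Set.mem_univ g)
    rwa [hclosed.closure_eq] at this
  exact ⟨LinearIsometryEquiv.ofSurjective VL hsurj, fun x ξ => by
    rw [show (LinearIsometryEquiv.ofSurjective VL hsurj) (Φ x ξ) = VL (Φ x ξ) from
      congrFun (LinearIsometryEquiv.coe_ofSurjective VL hsurj) _, hVLgen]⟩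

end Aux

/-- With feature maps Φ, Φ' whose feature vectors have dense span, H_K ⪯ H_G iff
there is a bounded operator T : W' → W with TΦ'(x) = Φ(x) for all x and T* isometric; and in
that case, G ≠ K iff T is not injective. -/
theorem stmt7 {X Λ W W' : Type*} [NormedAddCommGroup Λ] [InnerProductSpace ℂ Λ] [CompleteSpace Λ]
    [NormedAddCommGroup W] [InnerProductSpace ℂ W] [CompleteSpace W]
    [NormedAddCommGroup W'] [InnerProductSpace ℂ W'] [CompleteSpace W']
    (Φ : X → Λ →L[ℂ] W) (Φ' : X → Λ →L[ℂ] W')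
    (K G : X → X → Λ →L[ℂ] Λ)
    (hKdef : ∀ x y, K x y = ContinuousLinearMap.adjoint (Φ y) ∘L Φ x)
    (hGdef : ∀ x y, G x y = ContinuousLinearMap.adjoint (Φ' y) ∘L Φ' x)
    (hdense : Dense ((Submodule.span ℂ (Set.range fun p : X × Λ => Φ p.1 p.2) : Submodule ℂ W) : Set W))
    (hdense' : Dense ((Submodule.span ℂ (Set.range fun p : X × Λ => Φ' p.1 p.2) : Submodule ℂ W') : Set W'))
    {HK : Type*} [NormedAddCommGroup HK] [InnerProductSpace ℂ HK] [CompleteSpace HK]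
    (JK : HK →ₗ[ℂ] (X → Λ)) (kfK : X → Λ → HK) (hHK : IsVRKHS K HK JK kfK)
    {HG : Type*} [NormedAddCommGroup HG] [InnerProductSpace ℂ HG] [CompleteSpace HG]
    (JG : HG →ₗ[ℂ] (X → Λ)) (kfG : X → Λ → HG) (hHG : IsVRKHS G HG JG kfG) :
    (RKHSle JK JG ↔
        ∃ T : W' →L[ℂ] W, (∀ x, T ∘L Φ' x = Φ x) ∧
          ∀ u : W, ‖ContinuousLinearMap.adjoint T u‖ = ‖u‖) ∧
      (RKHSle JK JG →
        ∀ T : W' →L[ℂ] W, (∀ x, T ∘L Φ' x = Φ x) →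
          (∀ u : W, ‖ContinuousLinearMap.adjoint T u‖ = ‖u‖) →
          (G ≠ K ↔ ¬ Function.Injective T)) := by
  obtain ⟨VK, hVK⟩ := aux_feature_equiv Φ K hKdef hdense JK kfK hHK
  obtain ⟨VG, hVG⟩ := aux_feature_equiv Φ' G hGdef hdense' JG kfG hHG
  constructor
  · constructor
    · -- forward: RKHSle → ∃ T
      intro hle
      choose g hg hgn using hle
      have guniq : ∀ (f : HK) (g₂ : HG), JG g₂ = JK f → g₂ = g f := by
        intro f g₂ hg₂
        exact hHG.inj (hg₂.trans (hg f).symm)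
      have gadd : ∀ f₁ f₂, g (f₁ + f₂) = g f₁ + g f₂ := by
        intro f₁ f₂
        symm; apply guniq
        rw [map_add, hg, hg, map_add]
      have gsmul : ∀ (c : ℂ) f, g (c • f) = c • g f := by
        intro c f
        symm; apply guniq
        rw [_root_.map_smul, hg, _root_.map_smul]
      set S₀ : W →ₗ[ℂ] W' :=
        { toFun := fun w => VG.symm (g (VK w))
          map_add' := by intro a b; simp [map_add, gadd]
          map_smul' := by intro c a; simp [_root_.map_smul, gsmul] } with hS₀
      have hS₀norm : ∀ w, ‖S₀ w‖ = ‖w‖ := by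
        intro w
        show ‖VG.symm (g (VK w))‖ = ‖w‖
        rw [VG.symm.norm_map, hgn, VK.norm_map]
      set S : W →L[ℂ] W' := S₀.mkContinuous 1 (fun w => by rw [hS₀norm, one_mul]) with hS
      have hSa : ∀ w, S w = VG.symm (g (VK w)) := fun w => rfl
      refine ⟨ContinuousLinearMap.adjoint S, ?_, ?_⟩
      · intro x
        ext ξ
        apply ext_inner_right ℂ
        intro w
        rw [ContinuousLinearMap.comp_apply, ContinuousLinearMap.adjoint_inner_left, hSa]
        rw [← VG.inner_map_map, VG.apply_symm_apply, hVG, hHG.repro, hg, ← hHK.repro, ← hVK,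
          VK.inner_map_map]
      · intro u
        rw [ContinuousLinearMap.adjoint_adjoint]
        rw [show S u = S₀ u from rfl, hS₀norm]
    · -- backward: ∃ T → RKHSle
      rintro ⟨T, hT, hTiso⟩ f
      set Td := ContinuousLinearMap.adjoint T with hTd
      refine ⟨VG (Td (VK.symm f)), ?_, ?_⟩
      · funext x
        apply ext_inner_left ℂ
        intro ξ
        rw [← hHG.repro, ← hVG, VG.inner_map_map, ContinuousLinearMap.adjoint_inner_right]
        have h1 : T (Φ' x ξ) = Φ x ξ := by rw [← ContinuousLinearMap.comp_apply, hT]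
        rw [h1, ← VK.inner_map_map, hVK, VK.apply_symm_apply, hHK.repro]
      · rw [VG.norm_map, hTiso, VK.symm.norm_map]
  · -- second part
    intro _ T hT hTiso
    have hTapp : ∀ x ξ, T (Φ' x ξ) = Φ x ξ := by
      intro x ξ; rw [← ContinuousLinearMap.comp_apply, hT]
    set Td := ContinuousLinearMap.adjoint T with hTd
    have hIso : ∀ a b : W, ⟪Td a, Td b⟫ = ⟪a, b⟫ := fun a b =>
      (LinearIsometry.inner_map_map ⟨Td.toLinearMap, hTiso⟩ a b)
    have hTTd : ∀ b : W, T (Td b) = b := by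
      intro b
      apply ext_inner_left ℂ
      intro a
      rw [← ContinuousLinearMap.adjoint_inner_left T, ← hTd, hIso]
    rw [ne_eq, not_iff_not]
    constructor
    · intro hGK
      -- show Td ∘ T = id, hence T injective
      have hgen : ∀ x ξ, Td (T (Φ' x ξ)) = Φ' x ξ := by
        intro x ξ
        apply ext_inner_left ℂ
        have key : ∀ y η, ⟪Φ' y η, Td (T (Φ' x ξ))⟫ = ⟪Φ' y η, Φ' x ξ⟫ := by
          intro y η
          rw [hTd, ContinuousLinearMap.adjoint_inner_right, hTapp, hTapp]
          have h1 : ⟪Φ y η, Φ x ξ⟫ = ⟪η, K x y ξ⟫ := by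
            rw [hKdef]; simp only [ContinuousLinearMap.comp_apply]
            rw [ContinuousLinearMap.adjoint_inner_right]
          have h2 : ⟪Φ' y η, Φ' x ξ⟫ = ⟪η, G x y ξ⟫ := by
            rw [hGdef]; simp only [ContinuousLinearMap.comp_apply]
            rw [ContinuousLinearMap.adjoint_inner_right]
          rw [h1, h2, hGK]
        have hc1 : Continuous fun t : W' => ⟪t, Td (T ((Φ' x) ξ))⟫ :=
          Continuous.inner continuous_id continuous_const
        have hc2 : Continuous fun t : W' => ⟪t, (Φ' x) ξ⟫ :=
          Continuous.inner continuous_id continuous_const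
        have heq : Set.EqOn (fun t : W' => ⟪t, Td (T ((Φ' x) ξ))⟫)
            (fun t : W' => ⟪t, (Φ' x) ξ⟫)
            ((Submodule.span ℂ (Set.range fun p : X × Λ => Φ' p.1 p.2) : Submodule ℂ W') : Set W') := by
          intro t ht
          induction ht using Submodule.span_induction with
          | mem z hz => obtain ⟨⟨y, η⟩, rfl⟩ := hz; exact key y η
          | zero => simp
          | add a b _ _ ha hb => simp only [inner_add_left, ha, hb]
          | smul c a _ ha => simp only [inner_smul_left, ha]
        exact fun t => congrFun (Continuous.ext_on hdense' hc1 hc2 heq) t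
      have hTdT : ∀ t : W', Td (T t) = t := by
        have hc1 : Continuous fun t : W' => Td (T t) :=
          Td.continuous.comp T.continuous
        have heq : Set.EqOn (fun t : W' => Td (T t)) (fun t : W' => t)
            ((Submodule.span ℂ (Set.range fun p : X × Λ => Φ' p.1 p.2) : Submodule ℂ W') : Set W') := by
          intro t ht
          induction ht using Submodule.span_induction with
          | mem z hz => obtain ⟨⟨y, η⟩, rfl⟩ := hz; exact hgen y η
          | zero => simp
          | add a b _ _ ha hb => simp only [map_add, ha, hb]
          | smul c a _ ha => simp only [_root_.map_smul, ha]
        exact fun t => congrFun (Continuous.ext_on hdense' hc1 continuous_id heq) t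
      intro a b hab
      rw [← hTdT a, ← hTdT b, hab]
    · intro hinj
      have hTdT : ∀ t : W', Td (T t) = t := by
        intro t
        apply hinj
        rw [hTTd]
      funext x y
      rw [hGdef, hKdef]
      ext ξ
      simp only [ContinuousLinearMap.comp_apply]
      apply ext_inner_left ℂ
      intro η
      rw [ContinuousLinearMap.adjoint_inner_right, ContinuousLinearMap.adjoint_inner_right,
        ← hTapp x ξ, ← hTapp y η]
      conv_lhs => rw [← hTdT ((Φ' x) ξ)]
      rw [hTd, ContinuousLinearMap.adjoint_inner_right]
end
end

section
/- A Λ-valued RKHS H_K is of finite dimension n if and only if there exist an n×n Hermitian strictly positive-definite matrix A and n linearly independent functions φ_j: X → Λ such that K(x,y)ξ = Σ_{j=1}^n Σ_{k=1}^n A_{jk} (ξ, φ_j(x))_Λ φ_k(y) for all x, y ∈ X and ξ ∈ Λ. In particular, if {φ_j} is an orthonormal basis of H_K then K(x,y)ξ = Σ_j (ξ, φ_j(x))_Λ φ_j(y). -/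
open MeasureTheory ContinuousLinearMap
open scoped ComplexOrder

noncomputable section

local notation "⟪" x ", " y "⟫" => @inner ℂ _ _ x y

section Aux

variable {X : Type*} {Λ : Type*} [NormedAddCommGroup Λ] [InnerProductSpace ℂ Λ]

/-- Orthonormal basis expansion of the kernel. -/
theorem vrkhs_onb_expansion {K : X → X → Λ →L[ℂ] Λ}
    {H : Type*} [NormedAddCommGroup H] [InnerProductSpace ℂ H]
    {J : H →ₗ[ℂ] (X → Λ)} {kf : X → Λ → H} (hH : IsVRKHS K H J kf) {n : ℕ}
    (h : Fin n → H) (hon : Orthonormal ℂ h)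
    (hsp : Submodule.span ℂ (Set.range h) = (⊤ : Submodule ℂ H)) :
    ∀ (x y : X) (ξ : Λ), K x y ξ = ∑ j, ⟪J (h j) x, ξ⟫ • J (h j) y := by
  intro x y ξ
  have hb : (⊤ : Submodule ℂ H) ≤ Submodule.span ℂ (Set.range h) := hsp.ge
  let b := OrthonormalBasis.mk hon hb
  have hbe : ⇑b = h := OrthonormalBasis.coe_mk hon hb
  have h1 : kf x ξ = ∑ j, ⟪h j, kf x ξ⟫ • h j := by
    conv_lhs => rw [← b.sum_repr' (kf x ξ)]
    simp [hbe]
  have h2 : ∀ j, ⟪h j, kf x ξ⟫ = ⟪J (h j) x, ξ⟫ := by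
    intro j
    rw [← inner_conj_symm, hH.repro, inner_conj_symm]
  calc K x y ξ = J (kf x ξ) y := (congrFun (hH.kfun_eq x ξ) y).symm
    _ = ∑ j, ⟪J (h j) x, ξ⟫ • J (h j) y := by
        rw [h1, map_sum]
        simp [h2]

end Aux

/-- H_K has finite dimension n iff K(x,y)ξ = Σ_{j,k} A_{jk} (ξ,φ_j(x)) φ_k(y) for a
Hermitian strictly positive-definite n×n matrix A and linearly independent functions φ_j;
and if the φ_j form an orthonormal basis of H_K then K(x,y)ξ = Σ_j (ξ,φ_j(x)) φ_j(y). -/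
theorem stmt8 {X Λ : Type*} [NormedAddCommGroup Λ] [InnerProductSpace ℂ Λ] [CompleteSpace Λ]
    (K : X → X → Λ →L[ℂ] Λ) (hK : IsOpKernel K)
    {H : Type*} [NormedAddCommGroup H] [InnerProductSpace ℂ H] [CompleteSpace H]
    (J : H →ₗ[ℂ] (X → Λ)) (kf : X → Λ → H) (hH : IsVRKHS K H J kf) (n : ℕ) :
    ((FiniteDimensional ℂ H ∧ Module.finrank ℂ H = n) ↔
        ∃ (A : Matrix (Fin n) (Fin n) ℂ) (φ : Fin n → X → Λ),
          A.IsHermitian ∧ A.PosDef ∧ LinearIndependent ℂ φ ∧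
            ∀ (x y : X) (ξ : Λ), K x y ξ = ∑ j, ∑ k, (A j k * ⟪φ j x, ξ⟫) • φ k y) ∧
      ∀ h : Fin n → H, Orthonormal ℂ h →
        Submodule.span ℂ (Set.range h) = (⊤ : Submodule ℂ H) →
        ∀ (x y : X) (ξ : Λ), K x y ξ = ∑ j, ⟪J (h j) x, ξ⟫ • J (h j) y := by
  constructor
  · constructor
    · -- forward/backward of the iff
      rintro ⟨hfd, hrank⟩
      -- orthonormal basis of H of size n
      let b : OrthonormalBasis (Fin n) ℂ H := (stdOrthonormalBasis ℂ H).reindex (finCongr hrank)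
      have hon : Orthonormal ℂ ⇑b := b.orthonormal
      have hsp : Submodule.span ℂ (Set.range ⇑b) = (⊤ : Submodule ℂ H) := by
        rw [← b.coe_toBasis]; exact b.toBasis.span_eq
      refine ⟨1, fun j => J (b j), Matrix.isHermitian_one, Matrix.PosDef.one, ?_, ?_⟩
      · have := (hon.linearIndependent).map' J (LinearMap.ker_eq_bot.mpr hH.inj)
        exact this
      · intro x y ξ
        rw [vrkhs_onb_expansion hH ⇑b hon hsp x y ξ]
        refine Finset.sum_congr rfl fun j _ => ?_
        rw [Finset.sum_eq_single j]
        · simp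
        · intro k _ hk
          simp [Matrix.one_apply, (Ne.symm hk)]
        · simp
    · rintro ⟨A, φ, hherm, hpd, hli, hrep⟩
      -- span of kernel functions
      set S : Submodule ℂ H := Submodule.span ℂ {g : H | ∃ x ξ, g = kf x ξ} with hS
      have horth : Sᗮ = ⊥ := by
        rw [Submodule.eq_bot_iff]
        intro f hf
        have h0 : ∀ x ξ, ⟪kf x ξ, f⟫ = 0 := fun x ξ =>
          hf _ (Submodule.subset_span ⟨x, ξ, rfl⟩)
        have hJ0 : ∀ x, J f x = 0 := by
          intro x
          have := h0 x (J f x)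
          rw [hH.repro] at this
          exact inner_self_eq_zero.mp this
        apply hH.inj
        rw [map_zero]
        exact funext hJ0
      set T : Submodule ℂ (X → Λ) := Submodule.span ℂ (Set.range φ) with hT
      have hTfd : FiniteDimensional ℂ T := FiniteDimensional.span_of_finite ℂ (Set.finite_range φ)
      have hmem : ∀ (x : X) (ξ : Λ), J (kf x ξ) ∈ T := by
        intro x ξ
        have : J (kf x ξ) = ∑ j, ∑ k, (A j k * ⟪φ j x, ξ⟫) • φ k := by
          rw [hH.kfun_eq]
          funext y
          rw [hrep x y ξ]
          simp
        rw [this]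
        exact Submodule.sum_mem _ fun j _ => Submodule.sum_mem _ fun k _ =>
          Submodule.smul_mem _ _ (Submodule.subset_span ⟨k, rfl⟩)
      have hmapST : Submodule.map J S ≤ T := by
        rw [hS, Submodule.map_span, Submodule.span_le]
        rintro _ ⟨g, ⟨x, ξ, rfl⟩, rfl⟩
        exact hmem x ξ
      -- S is finite dimensional
      have hSfd : FiniteDimensional ℂ S := by
        let e : S →ₗ[ℂ] T := LinearMap.codRestrict T (J.domRestrict S)
          (fun s => hmapST ⟨s, s.2, rfl⟩)
        have he : Function.Injective e := by
          intro a b hab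
          have : J a.1 = J b.1 := congrArg Subtype.val hab
          exact Subtype.ext (hH.inj this)
        exact FiniteDimensional.of_injective e he
      have hStop : S = ⊤ := by
        have h1 : S.topologicalClosure = ⊤ := Submodule.topologicalClosure_eq_top_iff.mpr horth
        have h2 : S.topologicalClosure = S :=
          IsClosed.submodule_topologicalClosure_eq S.closed_of_finiteDimensional
        rw [← h2, h1]
      have hHfd : FiniteDimensional ℂ H := by
        rw [hStop] at hSfd
        exact Module.Finite.equiv (Submodule.topEquiv (R := ℂ) (M := H))
      refine ⟨hHfd, ?_⟩
      -- range J = T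
      have hrange : LinearMap.range J = T := by
        apply le_antisymm
        · rw [← Submodule.map_top, ← hStop]
          exact hmapST
        · -- each φ m is in the range
          rw [hT, Submodule.span_le]
          rintro _ ⟨m, rfl⟩
          -- linear combination map
          set P : (Fin n → ℂ) →ₗ[ℂ] (X → Λ) := Fintype.linearCombination ℂ φ with hP
          set v : X → Λ → (Fin n → ℂ) := fun x ξ j => ⟪φ j x, ξ⟫ with hv
          set U : Submodule ℂ (Fin n → ℂ) := Submodule.span ℂ {w | ∃ x ξ, w = v x ξ} with hU
          have hUtop : U = ⊤ := by
            by_contra hne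
            obtain ⟨f, hf0, hfb⟩ := Submodule.exists_dual_map_eq_bot_of_lt_top
              (lt_top_iff_ne_top.mpr hne) inferInstance
            have hfv : ∀ x ξ, f (v x ξ) = 0 := by
              intro x ξ
              have : f (v x ξ) ∈ Submodule.map f U :=
                ⟨v x ξ, Submodule.subset_span ⟨x, ξ, rfl⟩, rfl⟩
              rw [hfb] at this
              exact this
            set c : Fin n → ℂ := fun j => starRingEnd ℂ (f (Pi.single j 1)) with hc
            have hfsum : ∀ (w : Fin n → ℂ), f w = ∑ j, w j * f (Pi.single j 1) := by
              intro w
              conv_lhs => rw [← Finset.univ_sum_single w, map_sum]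
              refine Finset.sum_congr rfl fun j _ => ?_
              have : (Pi.single j (w j) : Fin n → ℂ) = w j • (Pi.single j (1 : ℂ) : Fin n → ℂ) := by
                rw [← Pi.single_smul, smul_eq_mul, mul_one]
              rw [this, LinearMap.map_smul, smul_eq_mul]
            have hzero : ∀ x, ∑ j, c j • φ j x = 0 := by
              intro x
              have key : ∀ ξ : Λ, ⟪∑ j, c j • φ j x, ξ⟫ = 0 := by
                intro ξ
                rw [sum_inner]
                have := hfv x ξ
                rw [hfsum] at this
                rw [← this]
                refine Finset.sum_congr rfl fun j _ => ?_
                rw [inner_smul_left, hc]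
                simp [hv, mul_comm]
              have := key (∑ j, c j • φ j x)
              exact inner_self_eq_zero.mp this
            have hcz : ∀ j, c j = 0 := by
              have h0 : ∑ j, c j • φ j = 0 := by
                funext x
                have := hzero x
                simpa using this
              intro j
              exact linearIndependent_iff'.mp hli Finset.univ c h0 j (Finset.mem_univ j)
            apply hf0
            apply (Pi.basisFun ℂ (Fin n)).ext
            intro j
            have : f (Pi.single j 1) = 0 := by
              have := hcz j
              rw [hc] at this
              simpa using congrArg (starRingEnd ℂ) this
            simpa [Pi.basisFun_apply] using this
          -- vecMul by A is surjective
          have hAunit : IsUnit A := by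
            rw [Matrix.isUnit_iff_isUnit_det]
            exact IsUnit.mk0 _ (ne_of_gt hpd.det_pos)
          have hvm : Function.Surjective (Matrix.vecMulLinear A) := by
            have hinj : Function.Injective (Matrix.vecMulLinear A) := by
              have := Matrix.vecMul_injective_iff_isUnit.mpr hAunit
              intro a b hab
              exact this (by simpa [Matrix.vecMulLinear_apply] using hab)
            exact (LinearMap.injective_iff_surjective).mp hinj
          -- φ m = P (Pi.single m 1)
          have hPm : φ m = P (Pi.single m 1) := by
            rw [hP, Fintype.linearCombination_apply]
            rw [Finset.sum_eq_single m]
            · simp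
            · intro k _ hk; simp [Pi.single_eq_of_ne hk]
            · simp
          -- each P (vecMul (v x ξ) A) is in range J
          have hPW : ∀ w ∈ Submodule.map (Matrix.vecMulLinear A) U,
              P w ∈ LinearMap.range J := by
            have hsub : Submodule.map P (Submodule.map (Matrix.vecMulLinear A) U) ≤
                LinearMap.range J := by
              rw [hU, Submodule.map_span, Submodule.map_span, Submodule.span_le]
              rintro _ ⟨_, ⟨w, ⟨x, ξ, rfl⟩, rfl⟩, rfl⟩
              refine ⟨kf x ξ, ?_⟩
              rw [hH.kfun_eq]
              funext y
              rw [hrep x y ξ]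
              simp only [hP, Fintype.linearCombination_apply, Matrix.vecMulLinear_apply,
                Matrix.vecMul, dotProduct, hv, Finset.sum_smul, Finset.sum_apply,
                Pi.smul_apply]
              rw [Finset.sum_comm]
              exact Finset.sum_congr rfl fun k _ => Finset.sum_congr rfl fun j _ => by
                rw [mul_comm]
            intro w hw
            exact hsub ⟨w, hw, rfl⟩
          have : Submodule.map (Matrix.vecMulLinear A) U = ⊤ := by
            rw [hUtop, Submodule.map_top, LinearMap.range_eq_top]
            exact hvm
          rw [hPm]
          exact hPW _ (by rw [this]; trivial)
      have h1 : Module.finrank ℂ H = Module.finrank ℂ (LinearMap.range J) :=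
        (LinearMap.finrank_range_of_inj hH.inj).symm
      rw [h1, hrange, hT, finrank_span_eq_card hli, Fintype.card_fin]
  · intro h hon hsp x y ξ
    exact vrkhs_onb_expansion hH h hon hsp x y ξ
end
end

section
/- Let φ_j: X → Λ, j = 1,…,m, be linearly independent, n ≤ m, and A (n×n), B (m×m) Hermitian strictly positive-definite matrices. Define K(x,y)ξ := Σ_{j,k≤n} A_{jk}(ξ, φ_j(x))_Λ φ_k(y) and G(x,y)ξ := Σ_{j,k≤m} B_{jk}(ξ, φ_j(x))_Λ φ_k(y). Then H_K ⪯ H_G if and only if B⁻¹ restricted to the first n indices coincides with A⁻¹, i.e., (B⁻¹)_{jk} = (A⁻¹)_{jk} for all j, k ∈ {1,…,n}. If so, G ≠ K if and only if m > n. -/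
open MeasureTheory ContinuousLinearMap
open scoped ComplexOrder

noncomputable section

local notation "⟪" x ", " y "⟫" => @inner ℂ _ _ x y

section AuxStmt9

variable {X : Type*} {Λ : Type*} [NormedAddCommGroup Λ] [InnerProductSpace ℂ Λ]

private lemma aux_indep {p : ℕ} {ψ : Fin p → X → Λ} (hψ : LinearIndependent ℂ ψ)
    (t : Fin p → ℂ) (h : ∀ (x : X) (ξ : Λ), ∑ j, t j * ⟪ξ, ψ j x⟫ = 0) :
    t = 0 := by
  have hz : (∑ j, t j • ψ j) = 0 := by
    funext x
    have hsx : (∑ j, t j • ψ j) x = ∑ j, t j • ψ j x := by simp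
    have key : ∀ ξ : Λ, (⟪ξ, (∑ j, t j • ψ j) x⟫ : ℂ) = 0 := by
      intro ξ
      rw [hsx, inner_sum]
      simp only [inner_smul_right]
      exact h x ξ
    have h0 := key ((∑ j, t j • ψ j) x)
    simpa using inner_self_eq_zero.mp h0
  funext j
  exact Fintype.linearIndependent_iff.mp hψ t hz j

private lemma aux_indep' {p : ℕ} {ψ : Fin p → X → Λ} (hψ : LinearIndependent ℂ ψ)
    (t : Fin p → ℂ) (h : ∀ (x : X) (ξ : Λ), ∑ j, t j * ⟪ψ j x, ξ⟫ = 0) :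
    t = 0 := by
  have h2 : ∀ (x : X) (ξ : Λ), ∑ j, (starRingEnd ℂ) (t j) * ⟪ξ, ψ j x⟫ = 0 := by
    intro x ξ
    have := congrArg (starRingEnd ℂ) (h x ξ)
    simpa [map_sum, map_mul, inner_conj_symm] using this
  have h3 := aux_indep hψ (fun j => (starRingEnd ℂ) (t j)) h2
  funext j
  have := congrFun h3 j
  simpa using this

private lemma aux_polar {p : ℕ} (M : Fin p → Fin p → ℂ)
    (h : ∀ cv : Fin p → ℂ, ∑ k, ∑ l, (starRingEnd ℂ) (cv k) * cv l * M k l = 0) :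
    ∀ k l, M k l = 0 := by
  classical
  let T : EuclideanSpace ℂ (Fin p) →ₗ[ℂ] EuclideanSpace ℂ (Fin p) :=
    { toFun := fun cv => WithLp.toLp 2 (fun k => ∑ l, cv l * (starRingEnd ℂ) (M l k))
      map_add' := by
        intro a b
        ext k
        simp [add_mul, Finset.sum_add_distrib]
      map_smul' := by
        intro r a
        ext k
        simp [Finset.mul_sum, mul_assoc] }
  have hT : T = 0 := by
    rw [← inner_map_self_eq_zero]
    intro cv
    rw [PiLp.inner_apply]
    simp only [RCLike.inner_apply]
    have hstep : ∀ k : Fin p,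
        (starRingEnd ℂ) (T cv k) * cv k
          = ∑ l, (starRingEnd ℂ) (cv l) * cv k * M l k := by
      intro k
      have hTk : T cv k = ∑ l, cv l * (starRingEnd ℂ) (M l k) := rfl
      rw [hTk, map_sum, Finset.sum_mul]
      refine Finset.sum_congr rfl fun l _ => ?_
      simp only [map_mul, RingHomCompTriple.comp_apply, RingHom.id_apply]
      ring
    rw [Finset.sum_congr rfl fun k _ => (mul_comm _ _).trans (hstep k), Finset.sum_comm]
    exact h cv.ofLp
  intro k l
  have h0 : T (EuclideanSpace.single k 1) = 0 := by rw [hT]; rfl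
  have h1 : ∑ l' : Fin p, EuclideanSpace.single k (1 : ℂ) l' * (starRingEnd ℂ) (M l' l) = 0 :=
    congrArg (fun v => v.ofLp l) h0
  simp only [EuclideanSpace.single_apply, ite_mul, one_mul, zero_mul,
    Finset.sum_ite_eq', Finset.mem_univ, if_true] at h1
  simpa using h1

private lemma aux_inner_sum {H : Type*} [NormedAddCommGroup H] [InnerProductSpace ℂ H]
    {p : ℕ} (a b : Fin p → ℂ) (u v : Fin p → H) :
    (⟪∑ k, a k • u k, ∑ l, b l • v l⟫ : ℂ)
      = ∑ k, ∑ l, (starRingEnd ℂ) (a k) * b l * ⟪u k, v l⟫ := by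
  rw [sum_inner]
  refine Finset.sum_congr rfl fun k _ => ?_
  rw [inner_sum]
  refine Finset.sum_congr rfl fun l _ => ?_
  rw [inner_smul_left, inner_smul_right]
  ring

private lemma aux_ext_sum {n m : ℕ} (hnm : n ≤ m) {V : Type*} [AddCommMonoid V] [Module ℂ V]
    (cv : Fin n → ℂ) (F : Fin m → V) :
    ∑ l : Fin m, (if h : (l : ℕ) < n then cv ⟨l, h⟩ else 0) • F l
      = ∑ k : Fin n, cv k • F (Fin.castLE hnm k) := by
  classical
  set f : ℕ → V := fun i =>
    if h : i < n then cv ⟨i, h⟩ • F (Fin.castLE hnm ⟨i, h⟩) else (0 : V) with hf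
  have key : ∀ l : Fin m,
      (if h : (l : ℕ) < n then cv ⟨l, h⟩ else 0) • F l = f (l : ℕ) := by
    intro l
    by_cases h : (l : ℕ) < n
    · rw [hf]
      simp only [dif_pos h]
      rfl
    · rw [hf]
      simp [h]
  have key2 : ∀ k : Fin n, cv k • F (Fin.castLE hnm k) = f (k : ℕ) := by
    intro k
    rw [hf]
    simp only [dif_pos k.2]
  rw [Finset.sum_congr rfl fun l _ => key l, Finset.sum_congr rfl fun k _ => key2 k,
    Fin.sum_univ_eq_sum_range f m, Fin.sum_univ_eq_sum_range f n]
  refine (Finset.sum_subset (Finset.range_subset_range.mpr hnm) fun i _ hi => ?_).symm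
  rw [hf]
  exact dif_neg (by simpa using hi)

private lemma aux_ext_sum_mul {n m : ℕ} (hnm : n ≤ m) (cv : Fin n → ℂ) (F : Fin m → ℂ) :
    ∑ l : Fin m, (if h : (l : ℕ) < n then cv ⟨l, h⟩ else 0) * F l
      = ∑ k : Fin n, cv k * F (Fin.castLE hnm k) := by
  simpa [smul_eq_mul] using aux_ext_sum hnm cv F

private lemma aux_double_red {n m : ℕ} (hnm : n ≤ m) (cv : Fin n → ℂ)
    (G : Fin m → Fin m → ℂ) :
    ∑ k : Fin m, ∑ l : Fin m,
        (starRingEnd ℂ) (if h : (k : ℕ) < n then cv ⟨k, h⟩ else 0)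
          * (if h : (l : ℕ) < n then cv ⟨l, h⟩ else 0) * G k l
      = ∑ k : Fin n, ∑ l : Fin n,
          (starRingEnd ℂ) (cv k) * cv l * G (Fin.castLE hnm k) (Fin.castLE hnm l) := by
  calc
    ∑ k : Fin m, ∑ l : Fin m,
        (starRingEnd ℂ) (if h : (k : ℕ) < n then cv ⟨k, h⟩ else 0)
          * (if h : (l : ℕ) < n then cv ⟨l, h⟩ else 0) * G k l
      = ∑ k : Fin m, (if h : (k : ℕ) < n then (starRingEnd ℂ) (cv ⟨k, h⟩) else 0)
          * ∑ l : Fin m, (if h : (l : ℕ) < n then cv ⟨l, h⟩ else 0) * G k l := by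
        refine Finset.sum_congr rfl fun k _ => ?_
        rw [Finset.mul_sum]
        refine Finset.sum_congr rfl fun l _ => ?_
        rw [apply_dite (starRingEnd ℂ), map_zero]
        ring
    _ = ∑ k : Fin m, (if h : (k : ℕ) < n then (starRingEnd ℂ) (cv ⟨k, h⟩) else 0)
          * ∑ l : Fin n, cv l * G k (Fin.castLE hnm l) := by
        refine Finset.sum_congr rfl fun k _ => ?_
        rw [aux_ext_sum_mul hnm cv fun l => G k l]
    _ = ∑ k : Fin n, (starRingEnd ℂ) (cv k)
          * ∑ l : Fin n, cv l * G (Fin.castLE hnm k) (Fin.castLE hnm l) :=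
        aux_ext_sum_mul hnm (fun k => (starRingEnd ℂ) (cv k))
          (fun k => ∑ l : Fin n, cv l * G k (Fin.castLE hnm l))
    _ = ∑ k : Fin n, ∑ l : Fin n,
          (starRingEnd ℂ) (cv k) * cv l * G (Fin.castLE hnm k) (Fin.castLE hnm l) := by
        refine Finset.sum_congr rfl fun k _ => ?_
        rw [Finset.mul_sum]
        exact Finset.sum_congr rfl fun l _ => by ring

private lemma rkhs_struct {p : ℕ} {ψ : Fin p → X → Λ} (hψ : LinearIndependent ℂ ψ)
    {M : Matrix (Fin p) (Fin p) ℂ} (hM : M.IsHermitian) (hMpd : M.PosDef)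
    {Q : X → X → Λ →L[ℂ] Λ}
    (hQdef : ∀ (x y : X) (ξ : Λ), Q x y ξ = ∑ j, ∑ k, (M j k * ⟪ψ j x, ξ⟫) • ψ k y)
    {H : Type*} [NormedAddCommGroup H] [InnerProductSpace ℂ H] [CompleteSpace H]
    {J : H →ₗ[ℂ] (X → Λ)} {kf : X → Λ → H} (hH : IsVRKHS Q H J kf) :
    ∃ e : Fin p → H, (∀ k, J (e k) = ψ k) ∧ (∀ k l, (⟪e k, e l⟫ : ℂ) = M⁻¹ l k) ∧
      ∀ f : H, ∃ c : Fin p → ℂ, f = ∑ k, c k • e k := by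
  classical
  have hdet : IsUnit M.det := hMpd.det_pos.ne'.isUnit
  have hdetT : IsUnit M.transpose.det := by rwa [Matrix.det_transpose]
  have hkf : ∀ (x : X) (ξ : Λ), J (kf x ξ) = ∑ k, (∑ j, M j k * ⟪ψ j x, ξ⟫) • ψ k := by
    intro x ξ
    rw [hH.kfun_eq]
    funext y
    rw [Finset.sum_apply]
    simp only [Pi.smul_apply, Finset.sum_smul, hQdef]
    exact Finset.sum_comm
  have hWtop : Submodule.span ℂ (Set.range fun q : X × Λ =>
      (WithLp.toLp 2 (fun j => ⟪ψ j q.1, q.2⟫) : EuclideanSpace ℂ (Fin p))) = ⊤ := by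
    have horth : ((Submodule.span ℂ (Set.range fun q : X × Λ =>
        (WithLp.toLp 2 (fun j => ⟪ψ j q.1, q.2⟫) : EuclideanSpace ℂ (Fin p)))
          : Submodule ℂ (EuclideanSpace ℂ (Fin p))))ᗮ = ⊥ := by
      rw [Submodule.eq_bot_iff]
      intro u hu
      have hu' : ∀ (x : X) (ξ : Λ), ∑ j, u j * ⟪ξ, ψ j x⟫ = 0 := by
        intro x ξ
        have h0 := (Submodule.mem_orthogonal _ u).mp hu _
          (Submodule.subset_span ⟨(x, ξ), rfl⟩)
        rw [PiLp.inner_apply] at h0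
        simp only [RCLike.inner_apply, WithLp.ofLp_toLp] at h0
        rw [← h0]
        exact Finset.sum_congr rfl fun j _ => by
          rw [inner_conj_symm]
      exact congrArg (WithLp.toLp 2) (aux_indep hψ u.ofLp hu')
    exact Submodule.orthogonal_eq_bot_iff.mp horth
  have hsolve : ∀ cvec : Fin p → ℂ, ∃ v : Fin p → ℂ, ∀ k, ∑ j, M j k * v j = cvec k := by
    intro cvec
    refine ⟨M.transpose⁻¹.mulVec cvec, fun k => ?_⟩
    have h1 : M.transpose.mulVec (M.transpose⁻¹.mulVec cvec) = cvec := by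
      rw [Matrix.mulVec_mulVec, Matrix.mul_nonsing_inv _ hdetT, Matrix.one_mulVec]
    have h2 := congrFun h1 k
    simpa [Matrix.mulVec, dotProduct, Matrix.transpose_apply] using h2
  let F' : EuclideanSpace ℂ (Fin p) →ₗ[ℂ] (X → Λ) :=
    { toFun := fun v => ∑ k, (∑ j, M j k * v j) • ψ k
      map_add' := by
        intro a b
        simp only [PiLp.add_apply, mul_add, Finset.sum_add_distrib, add_smul]
      map_smul' := by
        intro r a
        simp only [PiLp.smul_apply, smul_eq_mul, RingHom.id_apply, Finset.smul_sum, smul_smul]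
        refine Finset.sum_congr rfl fun k _ => ?_
        rw [Finset.mul_sum]
        congr 1
        exact Finset.sum_congr rfl fun j _ => by ring }
  have hrange : ∀ cvec : Fin p → ℂ, (∑ k, cvec k • ψ k) ∈ LinearMap.range J := by
    intro cvec
    obtain ⟨v, hv⟩ := hsolve cvec
    have hle : Submodule.map F' (Submodule.span ℂ (Set.range fun q : X × Λ =>
        (WithLp.toLp 2 (fun j => ⟪ψ j q.1, q.2⟫) : EuclideanSpace ℂ (Fin p)))) ≤ LinearMap.range J := by
      rw [Submodule.map_span, Submodule.span_le]
      rintro _ ⟨_, ⟨q, rfl⟩, rfl⟩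
      exact ⟨kf q.1 q.2, by rw [hkf]; rfl⟩
    have hmem : F' (WithLp.toLp 2 v) ∈ LinearMap.range J := by
      apply hle
      exact ⟨WithLp.toLp 2 v, by rw [hWtop]; exact Submodule.mem_top, rfl⟩
    have hFv : F' (WithLp.toLp 2 v) = ∑ k, cvec k • ψ k := by
      show (∑ k, (∑ j, M j k * v j) • ψ k) = _
      exact Finset.sum_congr rfl fun k _ => by rw [hv k]
    rwa [hFv] at hmem
  have hex : ∀ k, ∃ ek : H, J ek = ψ k := by
    intro k
    obtain ⟨f, hf⟩ := hrange (Pi.single k 1)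
    exact ⟨f, by rw [hf]; simp [Pi.single_apply, ite_smul]⟩
  choose e heJ using hex
  have hkfe : ∀ (x : X) (ξ : Λ), kf x ξ = ∑ k, (∑ j, M j k * ⟪ψ j x, ξ⟫) • e k := by
    intro x ξ
    apply hH.inj
    rw [hkf, map_sum]
    exact Finset.sum_congr rfl fun k _ => by rw [_root_.map_smul, heJ]
  have hgram : ∀ j l : Fin p, ∑ k, M k j * ⟪e k, e l⟫ = if j = l then 1 else 0 := by
    intro j0 l
    have h0 : ∀ (x : X) (ξ : Λ),
        ∑ j, ((∑ k, M k j * ⟪e k, e l⟫) - (if j = l then 1 else 0)) * ⟪ξ, ψ j x⟫ = 0 := by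
      intro x ξ
      have hr := hH.repro (e l) x ξ
      rw [heJ l] at hr
      have hl : (⟪kf x ξ, e l⟫ : ℂ)
          = ∑ j, (∑ k, M k j * ⟪e k, e l⟫) * ⟪ξ, ψ j x⟫ := by
        rw [hkfe x ξ, sum_inner]
        simp only [inner_smul_left, map_sum, map_mul, inner_conj_symm]
        simp only [Finset.sum_mul]
        rw [Finset.sum_comm]
        refine Finset.sum_congr rfl fun j _ => Finset.sum_congr rfl fun k _ => ?_
        rw [starRingEnd_apply, hM.apply k j]
        ring
      have hsplit : ∑ j, ((∑ k, M k j * ⟪e k, e l⟫) - (if j = l then 1 else 0)) * ⟪ξ, ψ j x⟫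
          = (∑ j, (∑ k, M k j * ⟪e k, e l⟫) * ⟪ξ, ψ j x⟫)
            - ∑ j, (if j = l then 1 else 0) * ⟪ξ, ψ j x⟫ := by
        rw [← Finset.sum_sub_distrib]
        exact Finset.sum_congr rfl fun j _ => by ring
      rw [hsplit, ← hl, hr]
      simp
    have ht0 := aux_indep hψ
      (fun j => (∑ k, M k j * ⟪e k, e l⟫) - (if j = l then 1 else 0)) h0
    have h1 := congrFun ht0 j0
    simp only [Pi.zero_apply] at h1
    exact sub_eq_zero.mp h1
  have hMg : M.transpose * Matrix.of (fun k l => (⟪e k, e l⟫ : ℂ)) = 1 := by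
    ext j l
    rw [Matrix.mul_apply]
    simp only [Matrix.transpose_apply, Matrix.of_apply, Matrix.one_apply]
    exact hgram j l
  have hginv : Matrix.of (fun k l => (⟪e k, e l⟫ : ℂ)) = M⁻¹.transpose := by
    rw [← Matrix.inv_eq_right_inv hMg, Matrix.transpose_nonsing_inv]
  refine ⟨e, heJ, ?_, ?_⟩
  · intro k l
    calc (⟪e k, e l⟫ : ℂ) = Matrix.of (fun k l => (⟪e k, e l⟫ : ℂ)) k l := rfl
      _ = M⁻¹.transpose k l := by rw [hginv]
      _ = M⁻¹ l k := Matrix.transpose_apply _ _ _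
  · intro f
    haveI hS : FiniteDimensional ℂ (Submodule.span ℂ (Set.range ψ)) :=
      FiniteDimensional.span_of_finite ℂ (Set.finite_range ψ)
    set T : Submodule ℂ H :=
      Submodule.span ℂ (Set.range fun q : X × Λ => kf q.1 q.2) with hTdef
    have hmap : Submodule.map J T ≤ Submodule.span ℂ (Set.range ψ) := by
      rw [hTdef, Submodule.map_span, Submodule.span_le]
      rintro _ ⟨_, ⟨q, rfl⟩, rfl⟩
      simp only [SetLike.mem_coe]
      rw [hkf]
      exact Submodule.sum_mem _ fun k _ =>
        Submodule.smul_mem _ _ (Submodule.subset_span ⟨k, rfl⟩)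
    haveI hfinT : FiniteDimensional ℂ T := by
      haveI : FiniteDimensional ℂ (Submodule.map J T) :=
        Submodule.finiteDimensional_of_le hmap
      exact (Submodule.equivMapOfInjective J hH.inj T).symm.finiteDimensional
    have hTtop : T = ⊤ := by
      have horth : Tᗮ = ⊥ := by
        rw [Submodule.eq_bot_iff]
        intro g hg
        have hJg : ∀ x : X, J g x = 0 := by
          intro x
          have h0 := (Submodule.mem_orthogonal _ g).mp hg _
            (by rw [hTdef]; exact Submodule.subset_span ⟨(x, J g x), rfl⟩)
          rw [hH.repro] at h0
          exact inner_self_eq_zero.mp h0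
        exact hH.inj (show J g = J 0 by rw [map_zero]; exact funext hJg)
      exact Submodule.orthogonal_eq_bot_iff.mp horth
    have hTe : T ≤ Submodule.span ℂ (Set.range e) := by
      rw [hTdef, Submodule.span_le]
      rintro _ ⟨q, rfl⟩
      simp only [SetLike.mem_coe]
      rw [hkfe q.1 q.2]
      exact Submodule.sum_mem _ fun k _ =>
        Submodule.smul_mem _ _ (Submodule.subset_span ⟨k, rfl⟩)
    have hf : f ∈ Submodule.span ℂ (Set.range e) := hTe (hTtop ▸ Submodule.mem_top)
    obtain ⟨c, hc⟩ := (Submodule.mem_span_range_iff_exists_fun ℂ).mp hf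
    exact ⟨c, hc.symm⟩

end AuxStmt9

/-- For kernels K, G built from Hermitian strictly positive-definite matrices A
(n×n), B (m×m) and linearly independent φ_1,…,φ_m, H_K ⪯ H_G iff B⁻¹ is an augmentation of
A⁻¹ ((B⁻¹)_{jk} = (A⁻¹)_{jk} for j,k ≤ n); in that case G ≠ K iff m > n. -/
theorem stmt9 {X Λ : Type*} [NormedAddCommGroup Λ] [InnerProductSpace ℂ Λ] [CompleteSpace Λ]
    (n m : ℕ) (hnm : n ≤ m) (φ : Fin m → X → Λ) (hφ : LinearIndependent ℂ φ)
    (A : Matrix (Fin n) (Fin n) ℂ) (B : Matrix (Fin m) (Fin m) ℂ)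
    (hA : A.IsHermitian) (hApd : A.PosDef) (hB : B.IsHermitian) (hBpd : B.PosDef)
    (K G : X → X → Λ →L[ℂ] Λ)
    (hKdef : ∀ (x y : X) (ξ : Λ),
      K x y ξ = ∑ j, ∑ k, (A j k * ⟪φ (Fin.castLE hnm j) x, ξ⟫) • φ (Fin.castLE hnm k) y)
    (hGdef : ∀ (x y : X) (ξ : Λ), G x y ξ = ∑ j, ∑ k, (B j k * ⟪φ j x, ξ⟫) • φ k y)
    {HK : Type*} [NormedAddCommGroup HK] [InnerProductSpace ℂ HK] [CompleteSpace HK]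
    (JK : HK →ₗ[ℂ] (X → Λ)) (kfK : X → Λ → HK) (hHK : IsVRKHS K HK JK kfK)
    {HG : Type*} [NormedAddCommGroup HG] [InnerProductSpace ℂ HG] [CompleteSpace HG]
    (JG : HG →ₗ[ℂ] (X → Λ)) (kfG : X → Λ → HG) (hHG : IsVRKHS G HG JG kfG) :
    (RKHSle JK JG ↔
        ∀ j k : Fin n, B⁻¹ (Fin.castLE hnm j) (Fin.castLE hnm k) = A⁻¹ j k) ∧
      (RKHSle JK JG → (G ≠ K ↔ n < m)) := by
  classical
  have hc : Function.Injective (Fin.castLE hnm) := Fin.castLE_injective hnm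
  have hψ : LinearIndependent ℂ (φ ∘ Fin.castLE hnm) := hφ.comp _ hc
  obtain ⟨e, heJ, heG, heS⟩ :=
    rkhs_struct hψ hA hApd (fun x y ξ => hKdef x y ξ) hHK
  obtain ⟨f', hfJ, hfG, hfS⟩ :=
    rkhs_struct hφ hB hBpd (fun x y ξ => hGdef x y ξ) hHG
  have fwd : RKHSle JK JG → ∀ j k : Fin n,
      B⁻¹ (Fin.castLE hnm j) (Fin.castLE hnm k) = A⁻¹ j k := by
    intro hle j k
    have hall : ∀ cv : Fin n → ℂ,
        ∑ k', ∑ l', (starRingEnd ℂ) (cv k') * cv l' *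
          ((⟪e k', e l'⟫ : ℂ) - ⟪f' (Fin.castLE hnm k'), f' (Fin.castLE hnm l')⟫) = 0 := by
      intro cv
      obtain ⟨g, hgJ, hgN⟩ := hle (∑ k', cv k' • e k')
      obtain ⟨d, rfl⟩ := hfS g
      have h1 : ∑ l, d l • φ l = ∑ k', cv k' • φ (Fin.castLE hnm k') := by
        have h1' := hgJ
        rw [map_sum, map_sum] at h1'
        simp only [_root_.map_smul, hfJ, heJ, Function.comp_apply] at h1'
        exact h1'
      have hd : d = fun l : Fin m => if h : (l : ℕ) < n then cv ⟨l, h⟩ else 0 := by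
        funext l
        have h2 : ∑ l', (d l' - (if h : (l' : ℕ) < n then cv ⟨l', h⟩ else 0)) • φ l' = 0 := by
          simp only [sub_smul]
          rw [Finset.sum_sub_distrib, h1, aux_ext_sum hnm cv φ, sub_self]
        exact sub_eq_zero.mp (Fintype.linearIndependent_iff.mp hφ _ h2 l)
      have hnormsq : (⟪∑ l, d l • f' l, ∑ l, d l • f' l⟫ : ℂ)
          = ⟪∑ k', cv k' • e k', ∑ k', cv k' • e k'⟫ := by
        rw [inner_self_eq_norm_sq_to_K, inner_self_eq_norm_sq_to_K, hgN]
      rw [aux_inner_sum, aux_inner_sum] at hnormsq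
      have hdsum : ∑ k'', ∑ l'', (starRingEnd ℂ) (d k'') * d l'' * (⟪f' k'', f' l''⟫ : ℂ)
          = ∑ k', ∑ l', (starRingEnd ℂ) (cv k') * cv l' *
              (⟪f' (Fin.castLE hnm k'), f' (Fin.castLE hnm l')⟫ : ℂ) := by
        simp only [hd]
        exact aux_double_red hnm cv fun k l => (⟪f' k, f' l⟫ : ℂ)
      have expand : ∑ k', ∑ l', (starRingEnd ℂ) (cv k') * cv l' *
            ((⟪e k', e l'⟫ : ℂ) - ⟪f' (Fin.castLE hnm k'), f' (Fin.castLE hnm l')⟫)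
          = (∑ k', ∑ l', (starRingEnd ℂ) (cv k') * cv l' * (⟪e k', e l'⟫ : ℂ))
            - ∑ k', ∑ l', (starRingEnd ℂ) (cv k') * cv l' *
                (⟪f' (Fin.castLE hnm k'), f' (Fin.castLE hnm l')⟫ : ℂ) := by
        rw [← Finset.sum_sub_distrib]
        refine Finset.sum_congr rfl fun k' _ => ?_
        rw [← Finset.sum_sub_distrib]
        exact Finset.sum_congr rfl fun l' _ => by ring
      rw [expand, ← hnormsq, ← hdsum, sub_self]
    have hz := aux_polar
      (fun k l => (⟪e k, e l⟫ : ℂ) - ⟪f' (Fin.castLE hnm k), f' (Fin.castLE hnm l)⟫) hall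
    have h3 : (⟪e k, e j⟫ : ℂ) - ⟪f' (Fin.castLE hnm k), f' (Fin.castLE hnm j)⟫ = 0 := hz k j
    rw [heG k j, hfG (Fin.castLE hnm k) (Fin.castLE hnm j)] at h3
    exact (sub_eq_zero.mp h3).symm
  have bwd : (∀ j k : Fin n, B⁻¹ (Fin.castLE hnm j) (Fin.castLE hnm k) = A⁻¹ j k) →
      RKHSle JK JG := by
    intro hBA f
    obtain ⟨cv, rfl⟩ := heS f
    refine ⟨∑ k, cv k • f' (Fin.castLE hnm k), ?_, ?_⟩
    · rw [map_sum, map_sum]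
      refine Finset.sum_congr rfl fun k _ => ?_
      rw [_root_.map_smul, _root_.map_smul, hfJ, heJ]
      rfl
    · have hsq : (⟪∑ k, cv k • f' (Fin.castLE hnm k), ∑ k, cv k • f' (Fin.castLE hnm k)⟫ : ℂ)
          = ⟪∑ k, cv k • e k, ∑ k, cv k • e k⟫ := by
        rw [aux_inner_sum, aux_inner_sum]
        refine Finset.sum_congr rfl fun k _ => Finset.sum_congr rfl fun l _ => ?_
        rw [heG, hfG, hBA]
      rw [@norm_eq_sqrt_re_inner ℂ, @norm_eq_sqrt_re_inner ℂ, hsq]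
  refine ⟨⟨fwd, bwd⟩, ?_⟩
  intro hle
  constructor
  · intro hGK
    by_contra hlt
    have heq : n = m := le_antisymm hnm (not_lt.mp hlt)
    apply hGK
    subst heq
    have hid : ∀ j : Fin n, Fin.castLE hnm j = j := fun j => rfl
    have hBinv : B⁻¹ = A⁻¹ := by
      ext j k
      have h4 := fwd hle j k
      rwa [hid, hid] at h4
    have hBA : B = A := by
      have h5 := congrArg (·⁻¹) hBinv
      rwa [Matrix.nonsing_inv_nonsing_inv _ hBpd.det_pos.ne'.isUnit,
        Matrix.nonsing_inv_nonsing_inv _ hApd.det_pos.ne'.isUnit] at h5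
    funext x y
    apply ContinuousLinearMap.ext
    intro ξ
    rw [hGdef, hKdef, hBA]
    exact Finset.sum_congr rfl fun j _ => Finset.sum_congr rfl fun k _ => by
      rw [hid j, hid k]
  · intro hlt hGK
    have hcol : ∀ j : Fin m, B j ⟨n, hlt⟩ = 0 := by
      have h0 : ∀ (x : X) (ξ : Λ), ∑ j, B j ⟨n, hlt⟩ * ⟪φ j x, ξ⟫ = 0 := by
        intro x ξ
        have hcoef : ∀ l : Fin m, (∑ j, B j l * ⟪φ j x, ξ⟫)
            - (if h : (l : ℕ) < n then
                (∑ j : Fin n, A j ⟨l, h⟩ * ⟪φ (Fin.castLE hnm j) x, ξ⟫) else 0) = 0 := by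
          have hsum0 : ∑ l : Fin m, ((∑ j, B j l * ⟪φ j x, ξ⟫)
              - (if h : (l : ℕ) < n then
                  (∑ j : Fin n, A j ⟨l, h⟩ * ⟪φ (Fin.castLE hnm j) x, ξ⟫) else 0)) • φ l
              = 0 := by
            simp only [sub_smul]
            rw [Finset.sum_sub_distrib]
            have hGf : ∑ l, (∑ j, B j l * ⟪φ j x, ξ⟫) • φ l = fun y => G x y ξ := by
              funext y
              rw [Finset.sum_apply]
              simp only [Pi.smul_apply, Finset.sum_smul]
              rw [hGdef]
              exact (Finset.sum_comm).symm
            have hKf : ∑ l : Fin m, (if h : (l : ℕ) < n then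
                  (∑ j : Fin n, A j ⟨l, h⟩ * ⟪φ (Fin.castLE hnm j) x, ξ⟫) else 0) • φ l
                = fun y => K x y ξ := by
              rw [aux_ext_sum hnm (fun k => ∑ j : Fin n,
                A j k * ⟪φ (Fin.castLE hnm j) x, ξ⟫) φ]
              funext y
              rw [Finset.sum_apply]
              simp only [Pi.smul_apply, Finset.sum_smul]
              rw [hKdef]
              exact (Finset.sum_comm).symm
            rw [hGf, hKf, hGK, sub_self]
          intro l
          exact Fintype.linearIndependent_iff.mp hφ _ hsum0 l
        have h6 := hcoef ⟨n, hlt⟩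
        rw [dif_neg (by simp)] at h6
        simpa using h6
      have h7 := aux_indep' hφ (fun j => B j ⟨n, hlt⟩) h0
      intro j
      exact congrFun h7 j
    exact hBpd.det_pos.ne' (Matrix.det_eq_zero_of_column_eq_zero ⟨n, hlt⟩ hcol)
end
end

section
/- Let K(x,y)ξ = Σ_{j=1}^n a_j (ξ, φ_j(x))_Λ φ_j(y) and G(x,y)ξ = Σ_{k=1}^m b_k (ξ, φ_k(x))_Λ φ_k(y), where n ≤ m, the a_j, b_k are positive constants, and φ_1,…,φ_m: X → Λ are linearly independent. Then H_K ⪯ H_G if and only if a_j = b_j for all j = 1,…,n. -/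
open MeasureTheory ContinuousLinearMap
open scoped ComplexOrder

noncomputable section

local notation "⟪" x ", " y "⟫" => @inner ℂ _ _ x y

section AuxDiag

variable {X Λ : Type*} [NormedAddCommGroup Λ] [InnerProductSpace ℂ Λ]

lemma sum_extend_zero' {M : Type*} [AddCommMonoid M] {n m : ℕ} (hnm : n ≤ m) (F : Fin m → M)
    (hF : ∀ k : Fin m, ¬ ((k : ℕ) < n) → F k = 0) :
    ∑ k, F k = ∑ j : Fin n, F (Fin.castLE hnm j) := by
  classical
  have hemb : ∀ j : Fin n, F (Fin.castLE hnm j) = F ((Fin.castLEEmb hnm) j) := fun _ => rfl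
  simp_rw [hemb]
  rw [← Finset.sum_map Finset.univ (Fin.castLEEmb hnm) F]
  apply (Finset.sum_subset (Finset.subset_univ _) ?_).symm
  intro k _ hk
  apply hF
  intro hlt
  apply hk
  apply Finset.mem_map.mpr
  refine ⟨⟨(k : ℕ), hlt⟩, Finset.mem_univ _, ?_⟩
  ext
  simp

lemma diag_main {N : ℕ} (ψ : Fin N → X → Λ) (hψ : LinearIndependent ℂ ψ)
    (c : Fin N → ℝ) (hc : ∀ j, 0 < c j)
    (K : X → X → Λ →L[ℂ] Λ)
    (hK : ∀ x y ξ, K x y ξ = ∑ j, ((c j : ℂ) * ⟪ψ j x, ξ⟫) • ψ j y)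
    {H : Type*} [NormedAddCommGroup H] [InnerProductSpace ℂ H] [CompleteSpace H]
    (J : H →ₗ[ℂ] (X → Λ)) (kf : X → Λ → H) (h : IsVRKHS K H J kf) :
    (∀ w : Fin N → ℂ, ∃ f : H, (J f = fun y => ∑ j, w j • ψ j y) ∧
        ‖f‖ ^ 2 = ∑ j, ‖w j‖ ^ 2 / c j) ∧
    (∀ f : H, ∃ w : Fin N → ℂ, (J f = fun y => ∑ j, w j • ψ j y) ∧
        ‖f‖ ^ 2 = ∑ j, ‖w j‖ ^ 2 / c j) := by
  classical
  obtain ⟨hJinj, hkfun, hrepro⟩ := h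
  have hkf_pt : ∀ (x : X) (ξ : Λ) (y : X),
      J (kf x ξ) y = ∑ l, ((c l : ℂ) * ⟪ψ l x, ξ⟫) • ψ l y := by
    intro x ξ y
    rw [hkfun]
    exact hK x y ξ
  set v : X × Λ → EuclideanSpace ℂ (Fin N) :=
    fun p => WithLp.toLp 2 (fun l => (c l : ℂ) * ⟪ψ l p.1, p.2⟫) with hv
  -- span of coordinate vectors is everything
  have hUtop : Submodule.span ℂ (Set.range v) = ⊤ := by
    set U := Submodule.span ℂ (Set.range v) with hU
    have horth : Uᗮ = ⊥ := by
      rw [Submodule.eq_bot_iff]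
      intro w hw
      have hvw : ∀ p : X × Λ, ⟪v p, w⟫ = 0 := by
        intro p
        exact (Submodule.mem_orthogonal U w).mp hw (v p) (Submodule.subset_span ⟨p, rfl⟩)
      have key : ∀ (x : X) (ξ : Λ), ⟪ξ, ∑ l, ((c l : ℂ) * w l) • ψ l x⟫ = 0 := by
        intro x ξ
        have := hvw (x, ξ)
        rw [PiLp.inner_apply] at this
        rw [inner_sum]
        rw [← this]
        congr 1
        funext l
        rw [inner_smul_right]
        have hvl : (v (x, ξ) l) = (c l : ℂ) * ⟪ψ l x, ξ⟫ := rfl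
        rw [RCLike.inner_apply, hvl, map_mul, ← inner_conj_symm (ψ l x) ξ, Complex.conj_conj,
          Complex.conj_ofReal]
        ring
      have key2 : ∀ x : X, ∑ l, ((c l : ℂ) * w l) • ψ l x = 0 := by
        intro x
        have := key x (∑ l, ((c l : ℂ) * w l) • ψ l x)
        exact inner_self_eq_zero.mp this
      have key3 : ∑ l, ((c l : ℂ) * w l) • ψ l = 0 := by
        funext x
        simp only [Finset.sum_apply, Pi.smul_apply, Pi.zero_apply]
        exact key2 x
      have := Fintype.linearIndependent_iff.mp hψ _ key3
      ext l
      have hl := this l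
      have hcl : (c l : ℂ) ≠ 0 := by exact_mod_cast (ne_of_gt (hc l))
      exact (mul_eq_zero.mp hl).resolve_left hcl
    have hfd : FiniteDimensional ℂ U := by infer_instance
    have hclosed := Submodule.closed_of_finiteDimensional U
    rw [← Submodule.topologicalClosure_eq_top_iff] at horth
    rwa [IsClosed.submodule_topologicalClosure_eq hclosed] at horth
  -- extract elements e j with J (e j) = ψ j
  have hex : ∀ j : Fin N, ∃ t : (X × Λ) →₀ ℂ,
      (t.sum fun p r => r • v p) = EuclideanSpace.single j 1 := by
    intro j
    have : (EuclideanSpace.single j 1 : EuclideanSpace ℂ (Fin N))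
        ∈ Submodule.span ℂ (Set.range v) := by rw [hUtop]; trivial
    exact Finsupp.mem_span_range_iff_exists_finsupp.mp this
  choose t ht using hex
  set e : Fin N → H := fun j => (t j).sum fun p r => r • kf p.1 p.2 with he
  -- coordinate identity
  have hcoord : ∀ j l, (∑ p ∈ (t j).support, (t j) p * ((c l : ℂ) * ⟪ψ l p.1, p.2⟫))
      = if j = l then 1 else 0 := by
    intro j l
    have h1 := congrArg
      (fun u : EuclideanSpace ℂ (Fin N) =>
        ⟪(EuclideanSpace.single l 1 : EuclideanSpace ℂ (Fin N)), u⟫) (ht j)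
    simp only [Finsupp.sum] at h1
    rw [inner_sum] at h1
    simp only [inner_smul_right, EuclideanSpace.inner_single_left, map_one, one_mul] at h1
    rw [EuclideanSpace.single_apply] at h1
    have h2 : ∀ p : X × Λ, v p l = (c l : ℂ) * ⟪ψ l p.1, p.2⟫ := fun p => rfl
    simp only [h2] at h1
    rw [h1]
    by_cases hjl : j = l
    · simp [hjl]
    · rw [if_neg hjl, if_neg (fun hh => hjl hh.symm)]
  have hcoord' : ∀ j l, (∑ p ∈ (t j).support, (t j) p * ⟪ψ l p.1, p.2⟫)
      = if j = l then ((c l : ℂ))⁻¹ else 0 := by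
    intro j l
    have hcl : (c l : ℂ) ≠ 0 := by exact_mod_cast (ne_of_gt (hc l))
    have h3 : (c l : ℂ) * (∑ p ∈ (t j).support, (t j) p * ⟪ψ l p.1, p.2⟫)
        = ∑ p ∈ (t j).support, (t j) p * ((c l : ℂ) * ⟪ψ l p.1, p.2⟫) := by
      rw [Finset.mul_sum]
      congr 1; funext p; ring
    have h4 := hcoord j l
    rw [← h3] at h4
    have h5 : ∑ p ∈ (t j).support, (t j) p * ⟪ψ l p.1, p.2⟫
        = (c l : ℂ)⁻¹ * (if j = l then 1 else 0) := by
      rw [← h4, inv_mul_cancel_left₀ hcl]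
    rw [h5]
    split <;> simp
  -- J of a finsupp combination of kernel functions
  have hJcomb : ∀ s : (X × Λ) →₀ ℂ,
      J (s.sum fun p r => r • kf p.1 p.2)
        = fun y => ∑ l, (∑ p ∈ s.support, s p * ((c l : ℂ) * ⟪ψ l p.1, p.2⟫)) • ψ l y := by
    intro s
    funext y
    rw [map_finsuppSum]
    simp only [Finsupp.sum, _root_.map_smul]
    rw [Finset.sum_apply]
    simp only [Pi.smul_apply, hkf_pt, Finset.smul_sum, smul_smul]
    rw [Finset.sum_comm]
    congr 1
    funext l
    rw [← Finset.sum_smul]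
  have hJe : ∀ j, J (e j) = ψ j := by
    intro j
    have : e j = (t j).sum fun p r => r • kf p.1 p.2 := rfl
    rw [this, hJcomb (t j)]
    funext y
    simp only [hcoord]
    simp only [ite_smul, one_smul, zero_smul, Finset.sum_ite_eq, Finset.mem_univ, if_true]
  -- master inner product formula
  have hinner : ∀ (j : Fin N) (f : H) (w : Fin N → ℂ),
      (J f = fun y => ∑ l, w l • ψ l y) → ⟪e j, f⟫ = w j * ((c j : ℂ))⁻¹ := by
    intro j f w hw
    have h1 : ⟪e j, f⟫ = ∑ p ∈ (t j).support, (starRingEnd ℂ) ((t j) p) * ⟪p.2, J f p.1⟫ := by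
      have : e j = (t j).sum fun p r => r • kf p.1 p.2 := rfl
      rw [this]
      simp only [Finsupp.sum]
      rw [sum_inner]
      simp only [inner_smul_left, hrepro]
    rw [h1]
    simp only [hw, inner_sum, inner_smul_right, Finset.mul_sum]
    rw [Finset.sum_comm]
    have h2 : ∀ l, ∑ p ∈ (t j).support, (starRingEnd ℂ) ((t j) p) * (w l * ⟪p.2, ψ l p.1⟫)
        = w l * (starRingEnd ℂ) (if j = l then ((c l : ℂ))⁻¹ else 0) := by
      intro l
      rw [← hcoord' j l, map_sum, Finset.mul_sum]
      apply Finset.sum_congr rfl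
      intro p _
      rw [map_mul, inner_conj_symm]
      ring
    simp only [h2]
    simp only [apply_ite (starRingEnd ℂ), map_inv₀, Complex.conj_ofReal, map_zero]
    simp only [mul_ite, mul_zero, Finset.sum_ite_eq, Finset.mem_univ, if_true]
  -- inner products of the e's
  have hee : ∀ j k, ⟪e j, e k⟫ = if k = j then ((c j : ℂ))⁻¹ else 0 := by
    intro j k
    have hJk : J (e k) = fun y => ∑ l, (if k = l then (1 : ℂ) else 0) • ψ l y := by
      rw [hJe k]
      funext y
      simp only [ite_smul, one_smul, zero_smul, Finset.sum_ite_eq, Finset.mem_univ, if_true]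
    have := hinner j (e k) _ hJk
    rw [this]
    by_cases hkj : k = j <;> simp [hkj]
  -- norm formula
  have hnorm : ∀ w : Fin N → ℂ, ‖∑ l, w l • e l‖ ^ 2 = ∑ l, ‖w l‖ ^ 2 / c l := by
    intro w
    have hip : ⟪∑ l, w l • e l, ∑ l, w l • e l⟫ = ((∑ l, ‖w l‖ ^ 2 / c l : ℝ) : ℂ) := by
      rw [sum_inner]
      simp only [inner_smul_left, inner_sum, inner_smul_right, hee]
      simp only [mul_ite, mul_zero, Finset.sum_ite_eq, Finset.sum_ite_eq',
        Finset.mem_univ, if_true]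
      push_cast
      apply Finset.sum_congr rfl
      intro l _
      rw [← mul_assoc, RCLike.mul_conj, div_eq_mul_inv]
      norm_cast
      exact (Complex.ofReal_mul _ _).symm
    have h2 := norm_sq_eq_re_inner (𝕜 := ℂ) (∑ l, w l • e l)
    rw [hip] at h2
    simpa [← Complex.ofReal_pow] using h2
  have hJsum : ∀ w : Fin N → ℂ, J (∑ l, w l • e l) = fun y => ∑ l, w l • ψ l y := by
    intro w
    rw [map_sum]
    funext y
    rw [Finset.sum_apply]
    apply Finset.sum_congr rfl
    intro l _
    rw [_root_.map_smul, Pi.smul_apply, hJe]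
  constructor
  · intro w
    exact ⟨∑ l, w l • e l, hJsum w, hnorm w⟩
  · intro f
    -- the span of kernel functions is all of H
    have hStop : Submodule.span ℂ (Set.range fun p : X × Λ => kf p.1 p.2) = ⊤ := by
      set S := Submodule.span ℂ (Set.range fun p : X × Λ => kf p.1 p.2) with hS
      have hmap : S.map J ≤ Submodule.span ℂ (Set.range ψ) := by
        rw [hS, Submodule.map_span, ← Set.range_comp]
        apply Submodule.span_le.mpr
        rintro _ ⟨p, rfl⟩
        have hrw : (⇑J ∘ fun p : X × Λ => kf p.1 p.2) p
            = ∑ l, ((c l : ℂ) * ⟪ψ l p.1, p.2⟫) • ψ l := by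
          funext y
          simp only [Function.comp_apply, hkf_pt, Finset.sum_apply, Pi.smul_apply]
        rw [hrw]
        exact Submodule.sum_smul_mem _ _ (fun l _ => Submodule.subset_span ⟨l, rfl⟩)
      have hfin : FiniteDimensional ℂ (Submodule.span ℂ (Set.range ψ)) :=
        FiniteDimensional.span_of_finite ℂ (Set.finite_range ψ)
      have hfin2 : FiniteDimensional ℂ (S.map J) := Submodule.finiteDimensional_of_le hmap
      have hfinS : FiniteDimensional ℂ S :=
        (Submodule.equivMapOfInjective J hJinj S).symm.finiteDimensional
      have hclosed := Submodule.closed_of_finiteDimensional S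
      have horth : Sᗮ = ⊥ := by
        rw [Submodule.eq_bot_iff]
        intro g hg
        have h0 : ∀ (x : X) (ξ : Λ), ⟪ξ, J g x⟫ = 0 := by
          intro x ξ
          rw [← hrepro]
          exact (Submodule.mem_orthogonal S g).mp hg _ (Submodule.subset_span ⟨(x, ξ), rfl⟩)
        have hg0 : J g = 0 := by
          funext x
          exact inner_self_eq_zero.mp (h0 x (J g x))
        apply hJinj
        rw [hg0, map_zero]
      rw [← Submodule.topologicalClosure_eq_top_iff] at horth
      rwa [IsClosed.submodule_topologicalClosure_eq hclosed] at horth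
    have hf : f ∈ Submodule.span ℂ (Set.range fun p : X × Λ => kf p.1 p.2) := by
      rw [hStop]; trivial
    obtain ⟨s, hs⟩ := Finsupp.mem_span_range_iff_exists_finsupp.mp hf
    set w : Fin N → ℂ := fun l => ∑ p ∈ s.support, s p * ((c l : ℂ) * ⟪ψ l p.1, p.2⟫) with hwdef
    have hJf : J f = fun y => ∑ l, w l • ψ l y := by
      rw [← hs]
      exact hJcomb s
    have hfeq : f = ∑ l, w l • e l := by
      apply hJinj
      rw [hJf, hJsum w]
    refine ⟨w, hJf, ?_⟩
    rw [hfeq]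
    exact hnorm w

end AuxDiag

/-- For diagonal kernels K(x,y)ξ = Σ_{j≤n} a_j (ξ,φ_j(x)) φ_j(y) and
G(x,y)ξ = Σ_{k≤m} b_k (ξ,φ_k(x)) φ_k(y) with positive constants and linearly independent φ's,
H_K ⪯ H_G iff a_j = b_j for all j ≤ n. -/
theorem stmt10 {X Λ : Type*} [NormedAddCommGroup Λ] [InnerProductSpace ℂ Λ] [CompleteSpace Λ]
    (n m : ℕ) (hnm : n ≤ m) (φ : Fin m → X → Λ) (hφ : LinearIndependent ℂ φ)
    (a : Fin n → ℝ) (b : Fin m → ℝ) (ha : ∀ j, 0 < a j) (hb : ∀ k, 0 < b k)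
    (K G : X → X → Λ →L[ℂ] Λ)
    (hKdef : ∀ (x y : X) (ξ : Λ),
      K x y ξ = ∑ j, ((a j : ℂ) * ⟪φ (Fin.castLE hnm j) x, ξ⟫) • φ (Fin.castLE hnm j) y)
    (hGdef : ∀ (x y : X) (ξ : Λ), G x y ξ = ∑ k, ((b k : ℂ) * ⟪φ k x, ξ⟫) • φ k y)
    {HK : Type*} [NormedAddCommGroup HK] [InnerProductSpace ℂ HK] [CompleteSpace HK]
    (JK : HK →ₗ[ℂ] (X → Λ)) (kfK : X → Λ → HK) (hHK : IsVRKHS K HK JK kfK)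
    {HG : Type*} [NormedAddCommGroup HG] [InnerProductSpace ℂ HG] [CompleteSpace HG]
    (JG : HG →ₗ[ℂ] (X → Λ)) (kfG : X → Λ → HG) (hHG : IsVRKHS G HG JG kfG) :
    RKHSle JK JG ↔ ∀ j : Fin n, a j = b (Fin.castLE hnm j) := by
  classical
  obtain ⟨KEx, KRepr⟩ := diag_main (fun j : Fin n => φ (Fin.castLE hnm j))
    (hφ.comp (Fin.castLE hnm) (Fin.castLE_injective hnm)) a ha K hKdef JK kfK hHK
  obtain ⟨GEx, GRepr⟩ := diag_main φ hφ b hb G hGdef JG kfG hHG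
  constructor
  · intro hle j
    obtain ⟨f, hJf, hnf⟩ := KEx (fun l => if l = j then 1 else 0)
    obtain ⟨g, hgJ, hgn⟩ := hle f
    obtain ⟨w', hJg, hng⟩ := GRepr g
    set d : Fin m → ℂ := fun k => if k = Fin.castLE hnm j then 1 else 0 with hd
    have hw'd : w' = d := by
      have hfun : ∑ k, (w' k - d k) • φ k = 0 := by
        funext x
        simp only [Finset.sum_apply, Pi.sub_apply, Pi.smul_apply, Pi.zero_apply, sub_smul]
        rw [Finset.sum_sub_distrib]
        have h1 : ∑ k, w' k • φ k x = φ (Fin.castLE hnm j) x := by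
          have e1 : ∑ k, w' k • φ k x = JG g x := (congrFun hJg x).symm
          have e2 : JG g x = JK f x := congrFun hgJ x
          have e3 : JK f x
              = ∑ l, (if l = j then (1 : ℂ) else 0) • φ (Fin.castLE hnm l) x :=
            congrFun hJf x
          rw [e1, e2, e3]
          simp [ite_smul, Finset.sum_ite_eq']
        have h2 : ∑ k, d k • φ k x = φ (Fin.castLE hnm j) x := by
          simp [hd, ite_smul, Finset.sum_ite_eq']
        rw [h1, h2, sub_self]
      have hli := Fintype.linearIndependent_iff.mp hφ _ hfun
      funext k
      exact sub_eq_zero.mp (hli k)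
    have hnf' : ‖f‖ ^ 2 = 1 / a j := by
      rw [hnf]
      have hterm : ∀ l : Fin n,
          ‖if l = j then (1 : ℂ) else 0‖ ^ 2 / a l = if l = j then 1 / a l else 0 := by
        intro l; split <;> simp
      simp only [hterm]
      simp [Finset.sum_ite_eq']
    have hng' : ‖g‖ ^ 2 = 1 / b (Fin.castLE hnm j) := by
      rw [hng, hw'd]
      have hterm : ∀ k : Fin m,
          ‖d k‖ ^ 2 / b k = if k = Fin.castLE hnm j then 1 / b k else 0 := by
        intro k
        simp only [hd]
        split <;> simp
      simp only [hterm]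
      simp [Finset.sum_ite_eq']
    have hsq : (1 : ℝ) / a j = 1 / b (Fin.castLE hnm j) := by
      rw [← hnf', ← hng', hgn]
    rw [one_div, one_div, inv_inj] at hsq
    exact hsq
  · intro hab f
    obtain ⟨w, hJf, hnf⟩ := KRepr f
    set w' : Fin m → ℂ := fun k => if hk : (k : ℕ) < n then w ⟨k, hk⟩ else 0 with hw'
    have hw'cast : ∀ l : Fin n, w' (Fin.castLE hnm l) = w l := by
      intro l
      simp only [hw']
      have hlt : ((Fin.castLE hnm l : Fin m) : ℕ) < n := by simp
      rw [dif_pos hlt]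
      rfl
    have hw'zero : ∀ k : Fin m, ¬ ((k : ℕ) < n) → w' k = 0 := by
      intro k hk
      simp only [hw']
      rw [dif_neg hk]
    obtain ⟨g, hJg, hng⟩ := GEx w'
    refine ⟨g, ?_, ?_⟩
    · rw [hJg, hJf]
      funext y
      rw [sum_extend_zero' hnm (fun k => w' k • φ k y)
        (fun k hk => by show w' k • φ k y = 0; rw [hw'zero k hk, zero_smul])]
      apply Finset.sum_congr rfl
      intro l _
      rw [hw'cast l]
    · have h1 : ‖g‖ ^ 2 = ‖f‖ ^ 2 := by
        rw [hng, hnf]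
        rw [sum_extend_zero' hnm (fun k => ‖w' k‖ ^ 2 / b k)
          (fun k hk => by show ‖w' k‖ ^ 2 / b k = 0; rw [hw'zero k hk]; simp)]
        apply Finset.sum_congr rfl
        intro l _
        rw [hw'cast l, hab l]
      have h2 := congrArg Real.sqrt h1
      rwa [Real.sqrt_sq (norm_nonneg _), Real.sqrt_sq (norm_nonneg _)] at h2
end
end

section
/- Let (Ω, 𝓕) be a measurable space, μ an 𝓛₊(Λ)-valued measure on 𝓕 of bounded variation, and Ψ: X × X × Ω → ℂ such that Ψ(·,·,t) is a scalar-valued positive-definite kernel on X for every t ∈ Ω, and Ψ(x,y,·) is bounded and 𝓕-measurable for all x, y. Then K(x,y) := ∫_Ω Ψ(x,y,t) dμ(t) is an 𝓛(Λ)-valued reproducing kernel on X. -/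
open MeasureTheory ContinuousLinearMap
open scoped ComplexOrder

noncomputable section

local notation "⟪" x ", " y "⟫" => @inner ℂ _ _ x y

section Aux2



variable {Λ : Type*} [NormedAddCommGroup Λ] [InnerProductSpace ℂ Λ]

/-- coefficients for polarization -/
def polc : Fin 4 → ℂ := ![1, -1, Complex.I, -Complex.I]

def polv (a b : Λ) : Fin 4 → Λ :=
  ![a + b, a - b, a + Complex.I • b, a - Complex.I • b]

lemma polar4 (T : Λ →L[ℂ] Λ) (a b : Λ) :
    ⟪b, T a⟫ = ∑ m : Fin 4, (polc m / 4) * ⟪polv a b m, T (polv a b m)⟫ := by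
  simp only [Fin.sum_univ_four, polc, polv]
  simp only [Matrix.cons_val_zero, Matrix.cons_val_one, Matrix.head_cons,
    Matrix.cons_val_two, Matrix.tail_cons, Matrix.cons_val_three]
  simp only [map_add, map_sub, _root_.map_smul, inner_add_left, inner_add_right,
    inner_sub_left, inner_sub_right, inner_smul_left, inner_smul_right,
    Complex.conj_I, ← pow_two, Complex.I_sq]
  ring_nf
  simp only [Complex.I_sq]
  ring

lemma nonneg_of_approx {S : ℂ} (h : ∀ ε : ℝ, 0 < ε → ∃ P : ℂ, 0 ≤ P ∧ ‖S - P‖ ≤ ε) :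
    0 ≤ S := by
  rw [Complex.le_def]
  constructor
  · by_contra hlt
    push_neg at hlt
    simp only [Complex.zero_re] at hlt
    obtain ⟨P, hP0, hPe⟩ := h (-S.re/2) (by linarith)
    have h1 : 0 ≤ P.re := by
      simpa using (Complex.le_def.mp hP0).1
    have h2 : |S.re - P.re| ≤ -S.re/2 := by
      have := (Complex.abs_re_le_norm (S - P)).trans hPe
      simpa [Complex.sub_re] using this
    have := abs_le.mp h2
    linarith [this.1, this.2]
  · simp only [Complex.zero_im]
    have him : ∀ ε : ℝ, 0 < ε → |S.im| ≤ ε := by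
      intro ε hε
      obtain ⟨P, hP0, hPe⟩ := h ε hε
      have hPim : P.im = 0 := by simpa using (Complex.le_def.mp hP0).2.symm
      have := (Complex.abs_im_le_norm (S - P)).trans hPe
      simpa [Complex.sub_im, hPim] using this
    by_contra hne
    have h0 : 0 < |S.im| := abs_pos.mpr (fun hh => hne hh.symm)
    linarith [him (|S.im|/2) (by linarith)]

lemma nonneg_of_hasSum_nonneg {ι : Type*} {T : ι → ℂ} {P : ℂ} (hs : HasSum T P)
    (h : ∀ v, 0 ≤ T v) : 0 ≤ P := by
  have hre : HasSum (fun v => (T v).re) P.re := (Complex.hasSum_iff _ _).mp hs |>.1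
  have him : HasSum (fun v => (T v).im) P.im := (Complex.hasSum_iff _ _).mp hs |>.2
  rw [Complex.le_def]
  constructor
  · simpa using hasSum_le (fun v => by simpa using (Complex.le_def.mp (h v)).1)
      hasSum_zero hre
  · have hz : (fun v => (T v).im) = fun _ => (0:ℝ) := by
      funext v
      simpa using (Complex.le_def.mp (h v)).2.symm
    rw [hz] at him
    exact (him.unique hasSum_zero).symm
  
lemma close_of_floor_eq {h : ℝ} (hh : 0 < h) {z w : ℂ}
    (hre : ⌊z.re / h⌋ = ⌊w.re / h⌋) (him : ⌊z.im / h⌋ = ⌊w.im / h⌋) :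
    ‖z - w‖ ≤ 2 * h := by
  have key : ∀ u u' : ℝ, ⌊u / h⌋ = ⌊u' / h⌋ → |u - u'| ≤ h := by
    intro u u' he
    have h2 : |u/h - u'/h| < 1 := Int.abs_sub_lt_one_of_floor_eq_floor he
    have h3 : u - u' = (u/h - u'/h) * h := by field_simp
    rw [h3, abs_mul, abs_of_pos hh]
    nlinarith [abs_nonneg (u/h - u'/h)]
  have h1 := key _ _ hre
  have h2 := key _ _ him
  calc ‖z - w‖ ≤ |(z - w).re| + |(z - w).im| := by
        exact Complex.norm_le_abs_re_add_abs_im _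
    _ ≤ 2 * h := by
        simp only [Complex.sub_re, Complex.sub_im]
        linarith

variable [CompleteSpace Λ]

lemma inner_self_nonneg_of_isPositive {P : Λ →L[ℂ] Λ} (hP : P.IsPositive) (w : Λ) :
    0 ≤ ⟪w, P w⟫ := by
  have h := (isPositive_iff_complex P).mp hP w
  have h2 : ⟪w, P w⟫ = ⟪P w, w⟫ := by
    rw [← inner_conj_symm, ← h.1]
    simp
  rw [h2, ← h.1]
  exact_mod_cast Complex.zero_le_real.mpr h.2

lemma schur_term_nonneg {n : ℕ} (P : Λ →L[ℂ] Λ) (hP : P.IsPositive)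
    (ψ : Fin n → Fin n → ℂ)
    (hψ : ∀ c : Fin n → ℂ, 0 ≤ ∑ j, ∑ l, (starRingEnd ℂ) (c l) * c j * ψ j l)
    (ξ : Fin n → Λ) :
    0 ≤ ∑ j, ∑ k, ψ j k * ⟪ξ k, P (ξ j)⟫ := by
  classical
  set M : Matrix (Fin n) (Fin n) ℂ := Matrix.of fun j k => ⟪ξ j, P (ξ k)⟫ with hM
  have hstar : ∀ j k, star (M k j) = M j k := by
    intro j k
    simp only [hM, Matrix.of_apply, RCLike.star_def]
    rw [inner_conj_symm, ← ContinuousLinearMap.adjoint_inner_left, hP.isSelfAdjoint.adjoint_eq]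
  have hMpsd : M.PosSemidef := by
    rw [Matrix.posSemidef_iff_dotProduct_mulVec]
    constructor
    · ext j k
      rw [Matrix.conjTranspose_apply]
      exact hstar j k
    · intro y
      have hw : dotProduct (star y) (M.mulVec y)
          = ⟪∑ j, y j • ξ j, P (∑ k, y k • ξ k)⟫ := by
        simp only [map_sum, inner_sum, sum_inner, inner_smul_left, inner_smul_right,
          ContinuousLinearMap.map_smul, dotProduct, Matrix.mulVec, hM, Matrix.of_apply,
          Pi.star_apply, RCLike.star_def, Finset.mul_sum]
        rw [Finset.sum_comm]
        refine Finset.sum_congr rfl fun j _ => Finset.sum_congr rfl fun k _ => by ring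
      rw [hw]
      exact inner_self_nonneg_of_isPositive hP _
  obtain ⟨B, hB⟩ : ∃ B : Matrix (Fin n) (Fin n) ℂ, M = B.conjTranspose * B := by
    open scoped MatrixOrder Matrix.Norms.L2Operator in
    exact CStarAlgebra.nonneg_iff_eq_star_mul_self.mp hMpsd.nonneg
  have hentry : ∀ j k, ⟪ξ k, P (ξ j)⟫ = ∑ r, (starRingEnd ℂ) (B r k) * B r j := by
    intro j k
    have h3 : M k j = (B.conjTranspose * B) k j := by rw [← hB]
    simpa [Matrix.mul_apply, Matrix.conjTranspose_apply, hM, RCLike.star_def] using h3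
  have hrw : ∑ j, ∑ k, ψ j k * ⟪ξ k, P (ξ j)⟫
      = ∑ r, ∑ j, ∑ k, (starRingEnd ℂ) (B r k) * (B r j) * ψ j k := by
    simp only [hentry, Finset.mul_sum]
    have h4 : ∀ j : Fin n, ∑ k, ∑ r, ψ j k * ((starRingEnd ℂ) (B r k) * B r j)
        = ∑ r, ∑ k, ψ j k * ((starRingEnd ℂ) (B r k) * B r j) := fun j => Finset.sum_comm
    rw [show (∑ j, ∑ k, ∑ r, ψ j k * ((starRingEnd ℂ) (B r k) * B r j))
        = ∑ r, ∑ j, ∑ k, ψ j k * ((starRingEnd ℂ) (B r k) * B r j) by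
      simp_rw [h4]; exact Finset.sum_comm]
    refine Finset.sum_congr rfl fun r _ => Finset.sum_congr rfl fun j _ =>
      Finset.sum_congr rfl fun k _ => by ring
  rw [hrw]
  exact Finset.sum_nonneg fun r _ => hψ fun i => B r i


end Aux2


/-- If μ is an 𝓛₊(Λ)-valued measure of bounded variation (encoded weakly: μop E is
a positive operator whose diagonal quadratic form (μ(E)ξ,ξ) is given by finite nonnegative
measures Q ξ) and Ψ(·,·,t) is a scalar positive-definite kernel for each t, with Ψ(x,y,·)
bounded and measurable, then K(x,y) = ∫_Ω Ψ(x,y,t) dμ(t) (encoded weakly via the quadratic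
forms) is an 𝓛(Λ)-valued reproducing kernel. -/
theorem stmt11 {X Λ Ω : Type*} [MeasurableSpace Ω]
    [NormedAddCommGroup Λ] [InnerProductSpace ℂ Λ] [CompleteSpace Λ]
    (Q : Λ → Measure Ω) (hQfin : ∀ ξ, IsFiniteMeasure (Q ξ))
    (μop : Set Ω → Λ →L[ℂ] Λ)
    (hμpos : ∀ E : Set Ω, MeasurableSet E → (μop E).IsPositive)
    (hdiag : ∀ (ξ : Λ) (E : Set Ω), MeasurableSet E → ⟪ξ, μop E ξ⟫ = ((Q ξ E).toReal : ℂ))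
    (Ψ : X → X → Ω → ℂ)
    (hΨkernel : ∀ t : Ω, IsScalarKernel fun x y => Ψ x y t)
    (hΨmeas : ∀ x y, Measurable (Ψ x y))
    (hΨbdd : ∀ x y, ∃ C : ℝ, ∀ t, ‖Ψ x y t‖ ≤ C)
    (K : X → X → Λ →L[ℂ] Λ)
    (hKdef : ∀ (x y : X) (ξ : Λ), ⟪ξ, K x y ξ⟫ = ∫ t, Ψ x y t ∂(Q ξ)) :
    IsOpKernel K := by
  classical
  have hconjPsi : ∀ (a b : X) (t : Ω), Ψ a b t = (starRingEnd ℂ) (Ψ b a t) :=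
    fun a b t => (hΨkernel t).1 b a
  constructor
  · -- hermitian
    intro x y
    have e1 : ∀ ξ : Λ, ⟪ξ, (ContinuousLinearMap.adjoint (K y x)) ξ⟫ = ⟪ξ, K x y ξ⟫ := by
      intro ξ
      have hcs : ⟪(K y x) ξ, ξ⟫ = (starRingEnd ℂ) ⟪ξ, (K y x) ξ⟫ := (inner_conj_symm _ _).symm
      rw [ContinuousLinearMap.adjoint_inner_right, hcs, hKdef y x ξ, ← integral_conj,
        hKdef x y ξ]
      exact integral_congr_ae (Filter.Eventually.of_forall fun t => (hconjPsi x y t).symm)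
    have h0 : ∀ ξ : Λ, ⟪(K x y - ContinuousLinearMap.adjoint (K y x)) ξ, ξ⟫ = 0 := by
      intro ξ
      have h2 : ⟪ξ, (K x y - ContinuousLinearMap.adjoint (K y x)) ξ⟫ = 0 := by
        simp only [ContinuousLinearMap.sub_apply, inner_sub_right, e1 ξ, sub_self]
      rw [← inner_conj_symm, h2, map_zero]
    have h1 := (inner_map_self_eq_zero
      ((K x y - ContinuousLinearMap.adjoint (K y x) : Λ →L[ℂ] Λ) : Λ →ₗ[ℂ] Λ)).mp h0
    have h2 : K x y - ContinuousLinearMap.adjoint (K y x) = 0 := by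
      ext ξ
      have h3 := congrArg (fun (f : Λ →ₗ[ℂ] Λ) => f ξ) h1
      simpa using h3
    exact sub_eq_zero.mp h2
  · -- positivity
    intro n x ξ
    cases isEmpty_or_nonempty Ω with
    | inl hEmp =>
      have hz : ∀ j k : Fin n, ⟪ξ k, K (x j) (x k) (ξ j)⟫ = 0 := by
        intro j k
        rw [polar4 (K (x j) (x k)) (ξ j) (ξ k)]
        have hzz : ∀ m : Fin 4,
            ⟪polv (ξ j) (ξ k) m, K (x j) (x k) (polv (ξ j) (ξ k) m)⟫ = 0 := by
          intro m
          rw [hKdef]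
          simp [integral_of_isEmpty]
        simp [hzz]
      simp [hz]
    | inr hne =>
      apply nonneg_of_approx
      intro ε hε
      choose C hC using fun j k => hΨbdd (x j) (x k)
      set Btot : ℝ :=
        ∑ j, ∑ k, ∑ m : Fin 4, ((Q (polv (ξ j) (ξ k) m)) Set.univ).toReal with hBdef
      have hB0 : 0 ≤ Btot := Finset.sum_nonneg fun j _ => Finset.sum_nonneg fun k _ =>
        Finset.sum_nonneg fun m _ => ENNReal.toReal_nonneg
      set δ : ℝ := ε / (Btot + 1) with hδdef
      have hδ : 0 < δ := div_pos hε (by linarith)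
      set gh : ℝ := δ / 2 with hghdef
      have hgh : 0 < gh := by positivity
      set Φ : Ω → (Fin n → Fin n → ℤ × ℤ) :=
        fun t j k => (⌊(Ψ (x j) (x k) t).re / gh⌋, ⌊(Ψ (x j) (x k) t).im / gh⌋) with hΦdef
      set E : (Fin n → Fin n → ℤ × ℤ) → Set Ω := fun v => Φ ⁻¹' {v} with hEdef
      have hEmeas : ∀ v, MeasurableSet (E v) := by
        intro v
        have hrw : E v = ⋂ j, ⋂ k,
            ((fun t => ((⌊(Ψ (x j) (x k) t).re / gh⌋, ⌊(Ψ (x j) (x k) t).im / gh⌋) : ℤ × ℤ))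
              ⁻¹' {v j k}) := by
          ext t
          simp only [hEdef, Set.mem_preimage, Set.mem_singleton_iff, Set.mem_iInter, hΦdef,
            funext_iff]
        rw [hrw]
        refine MeasurableSet.iInter fun j => MeasurableSet.iInter fun k => ?_
        have hm : Measurable
            (fun t => ((⌊(Ψ (x j) (x k) t).re / gh⌋, ⌊(Ψ (x j) (x k) t).im / gh⌋) : ℤ × ℤ)) := by
          refine Measurable.prodMk ?_ ?_
          · exact ((Complex.measurable_re.comp (hΨmeas (x j) (x k))).div_const gh).floor
          · exact ((Complex.measurable_im.comp (hΨmeas (x j) (x k))).div_const gh).floor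
        exact hm (measurableSet_singleton _)
      letI : MeasurableSpace (Fin n → Fin n → ℤ × ℤ) := ⊤
      have hΦmeas : Measurable Φ := measurable_to_countable' fun v => hEmeas v
      set pt : (Fin n → Fin n → ℤ × ℤ) → Ω :=
        fun v => if hv : (E v).Nonempty then hv.choose else hne.some with hptdef
      have hptm : ∀ v, (E v).Nonempty → Φ (pt v) = v := by
        intro v hv
        have hmem : pt v ∈ E v := by
          rw [hptdef]
          simp only [dif_pos hv]
          exact hv.choose_spec
        exact hmem
      set ΨS : Fin n → Fin n → Ω → ℂ := fun j k t => Ψ (x j) (x k) (pt (Φ t)) with hΨSdef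
      have hΨSmeas : ∀ j k, Measurable (ΨS j k) := fun j k =>
        (measurable_from_top (f := fun v => Ψ (x j) (x k) (pt v))).comp hΦmeas
      have hclose : ∀ j k t, ‖Ψ (x j) (x k) t - ΨS j k t‖ ≤ δ := by
        intro j k t
        have hvne : (E (Φ t)).Nonempty := ⟨t, rfl⟩
        have hfe := congrFun (congrFun (hptm (Φ t) hvne) j) k
        have hre : ⌊(Ψ (x j) (x k) t).re / gh⌋ = ⌊(ΨS j k t).re / gh⌋ :=
          (congrArg Prod.fst hfe).symm
        have him : ⌊(Ψ (x j) (x k) t).im / gh⌋ = ⌊(ΨS j k t).im / gh⌋ :=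
          (congrArg Prod.snd hfe).symm
        calc ‖Ψ (x j) (x k) t - ΨS j k t‖ ≤ 2 * gh := close_of_floor_eq hgh hre him
          _ = δ := by rw [hghdef]; ring
      have hInt : ∀ j k (η : Λ), Integrable (fun t => Ψ (x j) (x k) t) (Q η) := by
        intro j k η
        haveI := hQfin η
        exact (integrable_const (C j k)).mono'
          ((hΨmeas (x j) (x k)).aestronglyMeasurable)
          (Filter.Eventually.of_forall fun t => hC j k t)
      have hIntS : ∀ j k (η : Λ), Integrable (ΨS j k) (Q η) := by
        intro j k η
        haveI := hQfin η
        exact (integrable_const (C j k)).mono' ((hΨSmeas j k).aestronglyMeasurable)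
          (Filter.Eventually.of_forall fun t => hC j k _)
      have hdisj : Pairwise (Function.onFun Disjoint E) := by
        intro v w hvw
        simp only [Function.onFun, Set.disjoint_left]
        intro t htv htw
        apply hvw
        have h1 : Φ t = v := htv
        have h2 : Φ t = w := htw
        rw [← h1, h2]
      have hUnion : (⋃ v, E v) = Set.univ := by
        ext t
        simp only [Set.mem_iUnion, Set.mem_univ, iff_true]
        exact ⟨Φ t, rfl⟩
      have hsum : ∀ j k (η : Λ),
          HasSum (fun v => ((Q η) (E v)).toReal • Ψ (x j) (x k) (pt v))
            (∫ t, ΨS j k t ∂(Q η)) := by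
        intro j k η
        haveI := hQfin η
        have h1 := MeasureTheory.hasSum_integral_iUnion (μ := Q η) hEmeas hdisj
          ((hIntS j k η).integrableOn)
        rw [hUnion, Measure.restrict_univ] at h1
        have h2 : ∀ v, (∫ t in E v, ΨS j k t ∂(Q η))
            = ((Q η) (E v)).toReal • Ψ (x j) (x k) (pt v) := by
          intro v
          rw [setIntegral_congr_fun (hEmeas v) (g := fun _ => Ψ (x j) (x k) (pt v)) ?_,
            setIntegral_const, measureReal_def]
          intro t ht
          have h3 : Φ t = v := ht
          simp only [hΨSdef]
          rw [h3]
        simpa only [h2] using h1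
      set P : ℂ := ∑ j, ∑ k, ∑ m : Fin 4,
        (polc m / 4) * ∫ t, ΨS j k t ∂(Q (polv (ξ j) (ξ k) m)) with hPdef
      refine ⟨P, ?_, ?_⟩
      · -- 0 ≤ P
        set T : (Fin n → Fin n → ℤ × ℤ) → ℂ := fun v => ∑ j, ∑ k, ∑ m : Fin 4,
          (polc m / 4) * (((Q (polv (ξ j) (ξ k) m)) (E v)).toReal •
            Ψ (x j) (x k) (pt v)) with hTdef
        have hTsum : HasSum T P := by
          rw [hPdef, hTdef]
          refine hasSum_sum fun j _ => hasSum_sum fun k _ => hasSum_sum fun m _ => ?_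
          exact (hsum j k (polv (ξ j) (ξ k) m)).mul_left (polc m / 4)
        have hTnn : ∀ v, 0 ≤ T v := by
          intro v
          have hrepr : T v = ∑ j, ∑ k, Ψ (x j) (x k) (pt v) * ⟪ξ k, μop (E v) (ξ j)⟫ := by
            rw [hTdef]
            refine Finset.sum_congr rfl fun j _ => Finset.sum_congr rfl fun k _ => ?_
            rw [polar4 (μop (E v)) (ξ j) (ξ k), Finset.mul_sum]
            refine Finset.sum_congr rfl fun m _ => ?_
            rw [hdiag (polv (ξ j) (ξ k) m) (E v) (hEmeas v), Complex.real_smul]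
            ring
          rw [hrepr]
          exact schur_term_nonneg (μop (E v)) (hμpos (E v) (hEmeas v))
            (fun j k => Ψ (x j) (x k) (pt v)) (fun c => (hΨkernel (pt v)).2 n x c) ξ
        exact nonneg_of_hasSum_nonneg hTsum hTnn
      · -- error bound
        have hS : (∑ j, ∑ k, ⟪ξ k, K (x j) (x k) (ξ j)⟫)
            = ∑ j, ∑ k, ∑ m : Fin 4,
              (polc m / 4) * ∫ t, Ψ (x j) (x k) t ∂(Q (polv (ξ j) (ξ k) m)) := by
          refine Finset.sum_congr rfl fun j _ => Finset.sum_congr rfl fun k _ => ?_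
          rw [polar4 (K (x j) (x k)) (ξ j) (ξ k)]
          exact Finset.sum_congr rfl fun m _ => by rw [hKdef]
        have hterm : ∀ (j k : Fin n) (m : Fin 4),
            ‖(polc m / 4) * ∫ t, Ψ (x j) (x k) t ∂(Q (polv (ξ j) (ξ k) m))
              - (polc m / 4) * ∫ t, ΨS j k t ∂(Q (polv (ξ j) (ξ k) m))‖
            ≤ δ * ((Q (polv (ξ j) (ξ k) m)) Set.univ).toReal := by
          intro j k m
          haveI := hQfin (polv (ξ j) (ξ k) m)
          rw [← mul_sub, ← integral_sub (hInt j k _) (hIntS j k _), norm_mul]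
          have hc : ‖polc m / 4‖ ≤ 1 := by
            fin_cases m <;> simp [polc] <;> norm_num
          have hni : ‖∫ t, (Ψ (x j) (x k) t - ΨS j k t) ∂(Q (polv (ξ j) (ξ k) m))‖
              ≤ δ * ((Q (polv (ξ j) (ξ k) m)) Set.univ).toReal :=
            norm_integral_le_of_norm_le_const
              (Filter.Eventually.of_forall fun t => hclose j k t)
          calc ‖polc m / 4‖ * ‖∫ t, (Ψ (x j) (x k) t - ΨS j k t)
                ∂(Q (polv (ξ j) (ξ k) m))‖
              ≤ 1 * (δ * ((Q (polv (ξ j) (ξ k) m)) Set.univ).toReal) :=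
                mul_le_mul hc hni (norm_nonneg _) zero_le_one
            _ = δ * ((Q (polv (ξ j) (ξ k) m)) Set.univ).toReal := one_mul _
        rw [hS, hPdef]
        simp only [← Finset.sum_sub_distrib]
        calc ‖∑ j, ∑ k, ∑ m : Fin 4,
              ((polc m / 4) * ∫ t, Ψ (x j) (x k) t ∂(Q (polv (ξ j) (ξ k) m))
              - (polc m / 4) * ∫ t, ΨS j k t ∂(Q (polv (ξ j) (ξ k) m)))‖
            ≤ ∑ j, ∑ k, ∑ m : Fin 4,
              ‖(polc m / 4) * ∫ t, Ψ (x j) (x k) t ∂(Q (polv (ξ j) (ξ k) m))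
              - (polc m / 4) * ∫ t, ΨS j k t ∂(Q (polv (ξ j) (ξ k) m))‖ := by
              refine (norm_sum_le _ _).trans (Finset.sum_le_sum fun j _ => ?_)
              refine (norm_sum_le _ _).trans (Finset.sum_le_sum fun k _ => ?_)
              exact norm_sum_le _ _
          _ ≤ ∑ j, ∑ k, ∑ m : Fin 4,
              δ * ((Q (polv (ξ j) (ξ k) m)) Set.univ).toReal :=
              Finset.sum_le_sum fun j _ => Finset.sum_le_sum fun k _ =>
                Finset.sum_le_sum fun m _ => hterm j k m
          _ = δ * Btot := by
              rw [hBdef, Finset.mul_sum]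
              refine Finset.sum_congr rfl fun j _ => ?_
              rw [Finset.mul_sum]
              refine Finset.sum_congr rfl fun k _ => ?_
              rw [Finset.mul_sum]
          _ ≤ ε := by
              rw [hδdef, div_mul_eq_mul_div, div_le_iff₀ (by linarith)]
              nlinarith
end
end

section
/- Let k, g be scalar-valued reproducing kernels on Y and T_p: X → Y for p = 1,…,n be maps with ∪_{p=1}^n T_p(X) = Y. Define the matrix-valued kernels K(x,y) := [k(T_p x, T_q y)]_{p,q=1}^n and G(x,y) := [g(T_p x, T_q y)]_{p,q=1}^n on X with values in 𝓛(ℂⁿ). Then H_K ⪯ H_G if and only if H_k ⪯ H_g. -/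
open MeasureTheory ContinuousLinearMap
open scoped ComplexOrder

noncomputable section

local notation "⟪" x ", " y "⟫" => @inner ℂ _ _ x y

section Aux

/-- Two vectors with the same inner products against everything are equal. -/
lemma inner_left_determines {H : Type*} [NormedAddCommGroup H] [InnerProductSpace ℂ H]
    {a b : H} (h : ∀ f : H, ⟪a, f⟫ = ⟪b, f⟫) : a = b := by
  have h2 : ⟪a - b, a - b⟫ = 0 := by
    rw [inner_sub_left, h (a - b), sub_self]
  rw [← sub_eq_zero]
  exact inner_self_eq_zero.mp h2

/-- The key transfer: there is a surjective isometric map `Hk → HK` intertwining the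
embeddings via the transformations `T`. -/
lemma exists_transfer {X Y : Type*} (n : ℕ) (k : Y → Y → ℂ)
    (T : Fin n → X → Y) (hsurj : ∀ y : Y, ∃ (p : Fin n) (x : X), T p x = y)
    (K : X → X → EuclideanSpace ℂ (Fin n) →L[ℂ] EuclideanSpace ℂ (Fin n))
    (hKdef : ∀ (x y : X) (ξ : EuclideanSpace ℂ (Fin n)) (q : Fin n),
      K x y ξ q = ∑ p, k (T p x) (T q y) * ξ p)
    {Hk : Type*} [NormedAddCommGroup Hk] [InnerProductSpace ℂ Hk] [CompleteSpace Hk]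
    (Jk : Hk →ₗ[ℂ] (Y → ℂ)) (kfk : Y → Hk) (hHk : IsSRKHS k Hk Jk kfk)
    {HK : Type*} [NormedAddCommGroup HK] [InnerProductSpace ℂ HK] [CompleteSpace HK]
    (JK : HK →ₗ[ℂ] (X → EuclideanSpace ℂ (Fin n))) (kfK : X → EuclideanSpace ℂ (Fin n) → HK)
    (hHK : IsVRKHS K HK JK kfK) :
    ∃ Φ : Hk → HK, Function.Surjective Φ ∧ (∀ f, ‖Φ f‖ = ‖f‖) ∧
      ∀ (f : Hk) (x : X) (q : Fin n), JK (Φ f) x q = Jk f (T q x) := by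
  classical
  set ι := (Fin n) × X with hι
  set v : ι → Hk := fun i => kfk (T i.1 i.2) with hv
  set u : ι → HK := fun i => kfK i.2 (EuclideanSpace.single i.1 1) with hu
  set L : (ι →₀ ℂ) →ₗ[ℂ] Hk := Finsupp.linearCombination ℂ v with hL
  set M : (ι →₀ ℂ) →ₗ[ℂ] HK := Finsupp.linearCombination ℂ u with hM
  -- inner products of generators agree
  have huv : ∀ i j : ι, ⟪u i, u j⟫ = ⟪v i, v j⟫ := by
    intro i j
    have h1 : ⟪u i, u j⟫ =
        ⟪(EuclideanSpace.single i.1 1 : EuclideanSpace ℂ (Fin n)),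
          JK (kfK j.2 (EuclideanSpace.single j.1 1)) i.2⟫ :=
      hHK.repro _ _ _
    rw [h1, hHK.kfun_eq]
    have h2 : ⟪v i, v j⟫ = Jk (kfk (T j.1 j.2)) (T i.1 i.2) := hHk.repro _ _
    rw [h2, hHk.kfun_eq]
    rw [EuclideanSpace.inner_single_left]
    simp only [map_one, one_mul]
    rw [hKdef]
    simp [EuclideanSpace.single_apply]
  have hGram : ∀ c d : ι →₀ ℂ, ⟪M c, M d⟫ = ⟪L c, L d⟫ := by
    intro c d
    rw [hM, hL, Finsupp.linearCombination_apply, Finsupp.linearCombination_apply,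
      Finsupp.linearCombination_apply, Finsupp.linearCombination_apply,
      Finsupp.sum, Finsupp.sum, Finsupp.sum, Finsupp.sum, sum_inner, sum_inner]
    refine Finset.sum_congr rfl fun i _ => ?_
    rw [inner_sum, inner_sum]
    refine Finset.sum_congr rfl fun j _ => ?_
    rw [inner_smul_left, inner_smul_left, inner_smul_right, inner_smul_right, huv]
  have hnormLM : ∀ c : ι →₀ ℂ, ‖M c‖ = ‖L c‖ := by
    intro c
    have h1 := hGram c c
    rw [inner_self_eq_norm_sq_to_K, inner_self_eq_norm_sq_to_K] at h1
    have h2 : (‖M c‖ : ℝ) ^ 2 = (‖L c‖ : ℝ) ^ 2 := by exact_mod_cast h1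
    nlinarith [norm_nonneg (M c), norm_nonneg (L c)]
  have hMw : ∀ c d : ι →₀ ℂ, L c = L d → M c = M d := by
    intro c d hcd
    have h0 : ‖M c - M d‖ = 0 := by
      rw [← map_sub, hnormLM, map_sub, hcd, sub_self, norm_zero]
    rwa [norm_eq_zero, sub_eq_zero] at h0
  set R : Submodule ℂ Hk := LinearMap.range L with hR
  -- the map on the dense range of L
  have memchoice : ∀ s : R, L (LinearMap.mem_range.mp s.2).choose = (s : Hk) :=
    fun s => (LinearMap.mem_range.mp s.2).choose_spec
  set f₀fun : R → HK := fun s => M (LinearMap.mem_range.mp s.2).choose with hf₀fun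
  have keyf₀ : ∀ (s : R) (c : ι →₀ ℂ), L c = (s : Hk) → f₀fun s = M c := by
    intro s c hc
    exact hMw _ _ (by rw [memchoice s, hc])
  set f₀' : R →ₗ[ℂ] HK :=
    { toFun := f₀fun
      map_add' := by
        intro s t
        have hs := memchoice s
        have ht := memchoice t
        show f₀fun (s + t) = f₀fun s + f₀fun t
        rw [keyf₀ (s + t) ((LinearMap.mem_range.mp s.2).choose +
          (LinearMap.mem_range.mp t.2).choose) (by rw [map_add, hs, ht]; rfl), map_add]
      map_smul' := by
        intro a s
        have hs := memchoice s
        show f₀fun (a • s) = a • f₀fun s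
        rw [keyf₀ (a • s) (a • (LinearMap.mem_range.mp s.2).choose)
          (by rw [_root_.map_smul, hs]; rfl), _root_.map_smul] } with hf₀'
  have hf₀norm : ∀ s : R, ‖f₀' s‖ = ‖s‖ := by
    intro s
    show ‖f₀fun s‖ = ‖s‖
    rw [hf₀fun]
    simp only []
    rw [hnormLM, memchoice s]
    rfl
  set f₀ : R →L[ℂ] HK := LinearMap.mkContinuous f₀' 1
    (fun s => by rw [hf₀norm, one_mul]) with hf₀
  -- density of R
  have horth : Rᗮ = ⊥ := by
    rw [Submodule.eq_bot_iff]
    intro h hh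
    have hJ : Jk h = 0 := by
      funext y
      obtain ⟨p, x, rfl⟩ := hsurj y
      have hmem : v (p, x) ∈ R := ⟨Finsupp.single (p, x) 1, by
        rw [hL, Finsupp.linearCombination_single, one_smul]⟩
      show Jk h (T p x) = 0
      rw [← hHk.repro h (T p x)]
      exact (Submodule.mem_orthogonal _ _).mp hh _ hmem
    have := hHk.inj (by rw [hJ, map_zero] : Jk h = Jk 0)
    simpa using this
  have hdenseR : Dense (R : Set Hk) := by
    have := Submodule.topologicalClosure_eq_top_iff.mpr horth
    rw [← Submodule.dense_iff_topologicalClosure_eq_top] at this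
    exact this
  have hdense : DenseRange (R.subtypeL) := by
    have : Set.range (R.subtypeL) = (R : Set Hk) := Subtype.range_coe
    rw [DenseRange, this]
    exact hdenseR
  have h_e : IsUniformInducing (R.subtypeL) :=
    isUniformEmbedding_subtype_val.isUniformInducing
  set Φc : Hk →L[ℂ] HK := f₀.extend R.subtypeL with hΦc
  have hΦe : ∀ s : R, Φc (s : Hk) = f₀ s := fun s =>
    ContinuousLinearMap.extend_eq f₀ hdense h_e s
  have hΦL : ∀ c : ι →₀ ℂ, Φc (L c) = M c := by
    intro c
    have hmem : L c ∈ R := ⟨c, rfl⟩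
    have := hΦe ⟨L c, hmem⟩
    rw [this]
    exact keyf₀ ⟨L c, hmem⟩ c rfl
  -- norm preservation
  have hΦnorm : ∀ f : Hk, ‖Φc f‖ = ‖f‖ := by
    have := Continuous.ext_on hdenseR (continuous_norm.comp Φc.continuous)
      continuous_norm (fun f hf => by
        have := hΦe ⟨f, hf⟩
        show ‖Φc f‖ = ‖f‖
        rw [this, show ‖f₀ ⟨f, hf⟩‖ = ‖(⟨f, hf⟩ : R)‖ from hf₀norm _]
        rfl)
    exact fun f => congrFun this f
  -- inner product intertwining against generators
  have hinner : ∀ (i : ι) (f : Hk), ⟪u i, Φc f⟫ = ⟪v i, f⟫ := by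
    intro i
    have hui : u i = M (Finsupp.single i 1) := by
      rw [hM, Finsupp.linearCombination_single, one_smul]
    have hvi : v i = L (Finsupp.single i 1) := by
      rw [hL, Finsupp.linearCombination_single, one_smul]
    have := Continuous.ext_on hdenseR
      ((innerSL ℂ (u i)).continuous.comp Φc.continuous)
      (innerSL ℂ (v i)).continuous (fun f hf => by
        obtain ⟨c, hc⟩ := hf
        show ⟪u i, Φc f⟫ = ⟪v i, f⟫
        rw [← hc, hΦL, hui, hvi, hGram])
    exact fun f => congrFun this f
  have hrep : ∀ (f : Hk) (x : X) (q : Fin n), JK (Φc f) x q = Jk f (T q x) := by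
    intro f x q
    have h2 := hinner (q, x) f
    simp only [hu, hv] at h2
    rw [hHK.repro, hHk.repro, EuclideanSpace.inner_single_left] at h2
    simpa using h2
  -- linearity of kfK in the vector argument
  have hdet : ∀ a b : HK, (∀ f, ⟪a, f⟫ = ⟪b, f⟫) → a = b := fun a b h =>
    inner_left_determines h
  have kadd : ∀ (x : X) (ξ η : EuclideanSpace ℂ (Fin n)),
      kfK x (ξ + η) = kfK x ξ + kfK x η := by
    intro x ξ η
    refine hdet _ _ fun f => ?_
    simp only [hHK.repro, inner_add_left]
  have ksmul : ∀ (x : X) (a : ℂ) (ξ : EuclideanSpace ℂ (Fin n)),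
      kfK x (a • ξ) = a • kfK x ξ := by
    intro x a ξ
    refine hdet _ _ fun f => ?_
    simp only [hHK.repro, inner_smul_left]
  -- surjectivity
  have hΦsurj : Function.Surjective Φc := by
    have hiso : Isometry Φc := AddMonoidHomClass.isometry_of_norm Φc hΦnorm
    set Rng : Submodule ℂ HK := LinearMap.range (Φc : Hk →ₗ[ℂ] HK) with hRng
    have hclosed : IsClosed (Rng : Set HK) := by
      have h1 : (Rng : Set HK) = Set.range Φc := by
        ext F
        simp [hRng, LinearMap.mem_range]
      rw [h1]
      exact hiso.isClosedEmbedding.isClosed_range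
    have hgen : ∀ (x : X) (ξ : EuclideanSpace ℂ (Fin n)), kfK x ξ ∈ Rng := by
      intro x ξ
      have hdecomp : ξ = ∑ q : Fin n, ξ q • EuclideanSpace.single q 1 := by
        have hb := (EuclideanSpace.basisFun (Fin n) ℂ).sum_repr ξ
        simp only [EuclideanSpace.basisFun_repr, EuclideanSpace.basisFun_apply] at hb
        exact hb.symm
      rw [hdecomp]
      have hsum : kfK x (∑ q : Fin n, ξ q • EuclideanSpace.single q 1)
          = ∑ q : Fin n, ξ q • kfK x (EuclideanSpace.single q 1) := by
        induction (Finset.univ : Finset (Fin n)) using Finset.induction with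
        | empty =>
          simp only [Finset.sum_empty]
          refine hdet _ _ fun f => ?_
          rw [hHK.repro, inner_zero_left, inner_zero_left]
        | insert a s hnotmem ih =>
          rw [Finset.sum_insert hnotmem, Finset.sum_insert hnotmem, kadd, ksmul, ih]
      rw [hsum]
      refine Submodule.sum_mem _ fun q _ => Submodule.smul_mem _ _ ?_
      exact ⟨L (Finsupp.single (q, x) 1), by
        rw [show ((Φc : Hk →ₗ[ℂ] HK) : Hk → HK) = (Φc : Hk → HK) from rfl, hΦL,
          hM, Finsupp.linearCombination_single, one_smul]⟩
    have hSorth : (Submodule.span ℂ {w : HK | ∃ x ξ, kfK x ξ = w})ᗮ = ⊥ := by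
      rw [Submodule.eq_bot_iff]
      intro F hF
      have hJF : JK F = 0 := by
        funext x
        have hall : ∀ ξ : EuclideanSpace ℂ (Fin n), ⟪ξ, JK F x⟫ = 0 := by
          intro ξ
          rw [← hHK.repro]
          exact (Submodule.mem_orthogonal _ _).mp hF _ (Submodule.subset_span ⟨x, ξ, rfl⟩)
        have := hall (JK F x)
        exact inner_self_eq_zero.mp this
      have := hHK.inj (by rw [hJF, map_zero] : JK F = JK 0)
      simpa using this
    have hSdense : Dense ((Submodule.span ℂ {w : HK | ∃ x ξ, kfK x ξ = w}) : Set HK) := by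
      rw [Submodule.dense_iff_topologicalClosure_eq_top]
      exact Submodule.topologicalClosure_eq_top_iff.mpr hSorth
    have hle : (Submodule.span ℂ {w : HK | ∃ x ξ, kfK x ξ = w}) ≤ Rng := by
      rw [Submodule.span_le]
      rintro w ⟨x, ξ, rfl⟩
      exact hgen x ξ
    have htop : Rng = ⊤ := by
      have h1 : ((⊤ : Submodule ℂ HK) : Set HK) ⊆ closure (Rng : Set HK) := by
        intro F _
        have : F ∈ closure ((Submodule.span ℂ {w : HK | ∃ x ξ, kfK x ξ = w}) : Set HK) :=
          hSdense F
        exact closure_mono hle this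
      rw [hclosed.closure_eq] at h1
      exact le_antisymm le_top (fun F hF => h1 (by trivial))
    intro F
    have : F ∈ Rng := htop ▸ Submodule.mem_top
    obtain ⟨f, hf⟩ := this
    exact ⟨f, hf⟩
  exact ⟨Φc, hΦsurj, hΦnorm, hrep⟩

end Aux

/-- For transformation kernels K(x,y) = [k(T_p x, T_q y)]_{p,q} and
G(x,y) = [g(T_p x, T_q y)]_{p,q} with ∪_p T_p(X) = Y, H_K ⪯ H_G iff H_k ⪯ H_g. -/
theorem stmt17 {X Y : Type*} (n : ℕ) (k g : Y → Y → ℂ)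
    (hk : IsScalarKernel k) (hg : IsScalarKernel g)
    (T : Fin n → X → Y) (hsurj : ∀ y : Y, ∃ (p : Fin n) (x : X), T p x = y)
    (K G : X → X → EuclideanSpace ℂ (Fin n) →L[ℂ] EuclideanSpace ℂ (Fin n))
    (hKdef : ∀ (x y : X) (ξ : EuclideanSpace ℂ (Fin n)) (q : Fin n),
      K x y ξ q = ∑ p, k (T p x) (T q y) * ξ p)
    (hGdef : ∀ (x y : X) (ξ : EuclideanSpace ℂ (Fin n)) (q : Fin n),
      G x y ξ q = ∑ p, g (T p x) (T q y) * ξ p)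
    {Hk : Type*} [NormedAddCommGroup Hk] [InnerProductSpace ℂ Hk] [CompleteSpace Hk]
    (Jk : Hk →ₗ[ℂ] (Y → ℂ)) (kfk : Y → Hk) (hHk : IsSRKHS k Hk Jk kfk)
    {Hg : Type*} [NormedAddCommGroup Hg] [InnerProductSpace ℂ Hg] [CompleteSpace Hg]
    (Jg : Hg →ₗ[ℂ] (Y → ℂ)) (kfg : Y → Hg) (hHg : IsSRKHS g Hg Jg kfg)
    {HK : Type*} [NormedAddCommGroup HK] [InnerProductSpace ℂ HK] [CompleteSpace HK]
    (JK : HK →ₗ[ℂ] (X → EuclideanSpace ℂ (Fin n))) (kfK : X → EuclideanSpace ℂ (Fin n) → HK)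
    (hHK : IsVRKHS K HK JK kfK)
    {HG : Type*} [NormedAddCommGroup HG] [InnerProductSpace ℂ HG] [CompleteSpace HG]
    (JG : HG →ₗ[ℂ] (X → EuclideanSpace ℂ (Fin n))) (kfG : X → EuclideanSpace ℂ (Fin n) → HG)
    (hHG : IsVRKHS G HG JG kfG) :
    RKHSle JK JG ↔ RKHSle Jk Jg := by
  obtain ⟨ΦK, hΦKsurj, hΦKnorm, hΦKrep⟩ :=
    exists_transfer n k T hsurj K hKdef Jk kfk hHk JK kfK hHK
  obtain ⟨ΦG, hΦGsurj, hΦGnorm, hΦGrep⟩ :=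
    exists_transfer n g T hsurj G hGdef Jg kfg hHg JG kfG hHG
  constructor
  · intro h f
    obtain ⟨Gg, hJG, hnorm⟩ := h (ΦK f)
    obtain ⟨g', rfl⟩ := hΦGsurj Gg
    refine ⟨g', ?_, by rw [← hΦGnorm g', hnorm, hΦKnorm]⟩
    funext y
    obtain ⟨q, x, rfl⟩ := hsurj y
    rw [← hΦGrep g' x q, hJG, hΦKrep]
  · intro h F
    obtain ⟨f, rfl⟩ := hΦKsurj F
    obtain ⟨g', hJ, hn⟩ := h f
    refine ⟨ΦG g', ?_, by rw [hΦGnorm, hn, hΦKnorm]⟩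
    funext x
    refine PiLp.ext fun q => ?_
    rw [hΦGrep g' x q, hJ, ← hΦKrep f x q]
end
end
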